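/- arXiv:2010.05593 — 6 statements merged into one kernel-verified Lean document; each statement's English description precedes it below -/
import Mathlib

section
/- Let V be a symmetric positive definite real p×p matrix, μ ∈ ℝ^p, and y ∈ ℝ^p, and write q = (y−μ)ᵀ V^{−1} (y−μ) and η_α = (2π)^{−pα/2}(det V)^{−α/2}. Then, as α → 0⁺, the quantity η_α (1+α)^{−p/2} − (1 + 1/α) η_α e^{−(α/2) q} + 1/α converges to (p/2) ln(2π) + (1/2) ln det V + q/2 = −ln φ_{μ,V}(y). In other words, up to the additive constant 1/α, the per-observation density power divergence objective for the Gaussian model converges to the negative log-likelihood as α → 0⁺, so the minimum density power divergence estimator at α = 0 is the maximum likelihood estimator. -/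
open Matrix MeasureTheory

/-- The multivariate normal density `φ_{μ,V}(y)` on `ℝ^p`. -/
noncomputable def gaussianPdf {p : ℕ} (V : Matrix (Fin p) (Fin p) ℝ) (μ : Fin p → ℝ)
    (y : Fin p → ℝ) : ℝ :=
  (2 * Real.pi) ^ (-(p : ℝ) / 2) * V.det ^ (-(1 : ℝ) / 2) *
    Real.exp (-(1 / 2 : ℝ) * ((y - μ) ⬝ᵥ (V⁻¹ *ᵥ (y - μ))))

/-- with `q = (y−μ)ᵀV⁻¹(y−μ)` and `η_α = (2π)^{−pα/2}(det V)^{−α/2}`,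
the quantity `η_α(1+α)^{−p/2} − (1+1/α) η_α e^{−(α/2)q} + 1/α` converges, as `α → 0⁺`,
to `(p/2)ln(2π) + (1/2)ln det V + q/2`, which equals `−ln φ_{μ,V}(y)`:
the per-observation DPD objective converges to the negative log-likelihood. -/
theorem dpd_gaussian_objective_tendsto_neg_loglik {p : ℕ}
    (V : Matrix (Fin p) (Fin p) ℝ) (hVsymm : V.IsSymm) (hVpd : V.PosDef)
    (μ y : Fin p → ℝ) :
    Filter.Tendsto
      (fun α : ℝ =>
        ((2 * Real.pi) ^ (-(p : ℝ) * α / 2) * V.det ^ (-α / 2)) * (1 + α) ^ (-(p : ℝ) / 2)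
          - (1 + 1 / α) * ((2 * Real.pi) ^ (-(p : ℝ) * α / 2) * V.det ^ (-α / 2)) *
              Real.exp (-(α / 2) * ((y - μ) ⬝ᵥ (V⁻¹ *ᵥ (y - μ))))
          + 1 / α)
      (nhdsWithin 0 (Set.Ioi 0))
      (nhds ((p : ℝ) / 2 * Real.log (2 * Real.pi) + (1 / 2) * Real.log V.det
              + ((y - μ) ⬝ᵥ (V⁻¹ *ᵥ (y - μ))) / 2)) ∧
    (p : ℝ) / 2 * Real.log (2 * Real.pi) + (1 / 2) * Real.log V.det
        + ((y - μ) ⬝ᵥ (V⁻¹ *ᵥ (y - μ))) / 2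
      = - Real.log (gaussianPdf V μ y) := by
  have hc : (0:ℝ) < 2 * Real.pi := by positivity
  have hd : (0:ℝ) < V.det := hVpd.det_pos
  set q : ℝ := ((y - μ) ⬝ᵥ (V⁻¹ *ᵥ (y - μ))) with hq
  set L : ℝ := (p:ℝ)/2 * Real.log (2*Real.pi) + (1/2) * Real.log V.det with hL
  set M : ℝ := L + q/2 with hM
  have hMgoal : (p:ℝ)/2 * Real.log (2*Real.pi) + (1/2)*Real.log V.det + q/2 = M := by
    rw [hM, hL]
  constructor
  · -- the limit
    have hG : HasDerivAt (fun α : ℝ => Real.exp (-(α * M))) (-M) 0 := by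
      have h1 : HasDerivAt (fun α : ℝ => -(α * M)) (-(1 * M)) 0 :=
        ((hasDerivAt_id (0:ℝ)).mul_const M).neg
      have := h1.exp
      simpa using this
    have hslope := hasDerivAt_iff_tendsto_slope.mp hG
    have h3 : Filter.Tendsto (fun α : ℝ => (Real.exp (-(α * M)) - 1) / α)
        (nhdsWithin 0 (Set.Ioi 0)) (nhds (-M)) := by
      have hmono : nhdsWithin (0:ℝ) (Set.Ioi 0) ≤ nhdsWithin 0 {(0:ℝ)}ᶜ :=
        nhdsWithin_mono _ (fun x hx => ne_of_gt hx)
      refine (hslope.mono_left hmono).congr (fun α => ?_)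
      simp [slope_def_field]
    have h1 : Filter.Tendsto (fun α : ℝ => Real.exp (-(α * L)) * (1 + α) ^ (-(p:ℝ)/2))
        (nhdsWithin 0 (Set.Ioi 0)) (nhds 1) := by
      have hca : ContinuousAt (fun α : ℝ => Real.exp (-(α * L)) * (1 + α) ^ (-(p:ℝ)/2)) 0 := by
        apply ContinuousAt.mul
        · exact (Real.continuous_exp.comp (continuous_neg.comp (continuous_id.mul continuous_const))).continuousAt
        · exact (Real.continuousAt_rpow_const (1 + 0 : ℝ) (-(p:ℝ)/2)
            (Or.inl (by norm_num))).comp ((continuous_const.add continuous_id).continuousAt)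
      have := hca.tendsto
      simp only [zero_mul, neg_zero, Real.exp_zero, add_zero, Real.one_rpow, one_mul] at this
      exact this.mono_left nhdsWithin_le_nhds
    have h2 : Filter.Tendsto (fun α : ℝ => Real.exp (-(α * M)))
        (nhdsWithin 0 (Set.Ioi 0)) (nhds 1) := by
      have : ContinuousAt (fun α : ℝ => Real.exp (-(α * M))) 0 :=
        (Real.continuous_exp.comp (continuous_neg.comp (continuous_id.mul continuous_const))).continuousAt
      have := this.tendsto
      simp only [zero_mul, neg_zero, Real.exp_zero] at this
      exact this.mono_left nhdsWithin_le_nhds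
    have hcomb := (h1.sub h2).sub h3
    have hval : (1:ℝ) - 1 - (-M) = M := by ring
    rw [hval] at hcomb
    refine hcomb.congr' ?_
    filter_upwards [self_mem_nhdsWithin] with α hα
    have hα0 : (0:ℝ) < α := hα
    have hαne : α ≠ 0 := ne_of_gt hα0
    have hE : (2 * Real.pi) ^ (-(p : ℝ) * α / 2) * V.det ^ (-α / 2)
        = Real.exp (-(α * L)) := by
      rw [Real.rpow_def_of_pos hc, Real.rpow_def_of_pos hd, ← Real.exp_add]
      congr 1
      rw [hL]; ring
    have hEM : Real.exp (-(α * L)) * Real.exp (-(α / 2) * q) = Real.exp (-(α * M)) := by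
      rw [← Real.exp_add]
      congr 1
      rw [hM]; ring
    rw [hE]
    rw [show (1 + 1/α) * Real.exp (-(α * L)) * Real.exp (-(α/2) * q)
        = (1 + 1/α) * (Real.exp (-(α * L)) * Real.exp (-(α/2) * q)) by ring, hEM]
    field_simp
    ring
  · -- equality with neg log pdf
    unfold gaussianPdf
    rw [← hq]
    have h1 : (2 * Real.pi) ^ (-(p : ℝ) / 2) ≠ 0 := ne_of_gt (Real.rpow_pos_of_pos hc _)
    have h2 : V.det ^ (-(1:ℝ) / 2) ≠ 0 := ne_of_gt (Real.rpow_pos_of_pos hd _)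
    rw [Real.log_mul (mul_ne_zero h1 h2) (Real.exp_ne_zero _), Real.log_mul h1 h2,
      Real.log_rpow hc, Real.log_rpow hd, Real.log_exp]
    ring
end

section
/- Let V be a symmetric positive definite real p×p matrix, μ ∈ ℝ^p, α ≥ 0, and B any real p×p matrix. Then ∫_{ℝ^p} φ_{μ,V}(y)^{1+α} · (y−μ)ᵀ B (y−μ) dy = (2π)^{−pα/2} (det V)^{−α/2} (1+α)^{−p/2−1} · Tr(V B). -/
open Matrix MeasureTheory

section Auxiliary

open Real Set Filter


lemma int_exp' : Integrable fun t : ℝ => Real.exp (-(1/2 : ℝ) * t ^ 2) :=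
  integrable_exp_neg_mul_sq (by norm_num)

lemma int_mul_exp' : Integrable fun t : ℝ => Real.exp (-(1/2 : ℝ) * t ^ 2) * t := by
  simpa [mul_comm] using integrable_mul_exp_neg_mul_sq (b := (1/2:ℝ)) (by norm_num)

lemma int_sq_exp' : Integrable fun t : ℝ => Real.exp (-(1/2 : ℝ) * t ^ 2) * (t * t) := by
  have h := integrable_rpow_mul_exp_neg_mul_sq (b := (1/2:ℝ)) (by norm_num) (s := 2) (by norm_num)
  have h2 : ∀ t : ℝ, t ^ (2:ℝ) = t * t := fun t => by rw [Real.rpow_two]; ring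
  simpa [h2, mul_comm] using h

lemma val_exp' : ∫ t : ℝ, Real.exp (-(1/2 : ℝ) * t ^ 2) = Real.sqrt (2 * Real.pi) := by
  rw [integral_gaussian]
  congr 1
  rw [div_div_eq_mul_div]
  norm_num [mul_comm]

lemma val_odd' : ∫ t : ℝ, Real.exp (-(1/2 : ℝ) * t ^ 2) * t = 0 := by
  have h := integral_neg_eq_self (fun t : ℝ => Real.exp (-(1/2:ℝ) * t ^ 2) * t) volume
  simp only [neg_sq, mul_neg, integral_neg] at h
  linarith

lemma val_sq' : ∫ t : ℝ, Real.exp (-(1/2:ℝ) * t ^ 2) * (t * t) = Real.sqrt (2 * Real.pi) := by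
  have hderiv : ∀ x ∈ Set.Ici (0:ℝ), HasDerivAt (fun t : ℝ => -t * Real.exp (-(1/2:ℝ)*t^2))
      (Real.exp (-(1/2:ℝ)*x^2) * (x*x) - Real.exp (-(1/2:ℝ)*x^2)) x := by
    intro x _
    have h1 : HasDerivAt (fun t : ℝ => -t) (-1) x := (hasDerivAt_id x).neg
    have h2 : HasDerivAt (fun t : ℝ => Real.exp (-(1/2:ℝ)*t^2))
        (Real.exp (-(1/2:ℝ)*x^2) * (-(1/2:ℝ) * (2 * x^1))) x :=
      ((hasDerivAt_pow 2 x).const_mul (-(1/2:ℝ))).exp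
    have h3 : HasDerivAt (fun t : ℝ => -t * Real.exp (-(1/2:ℝ)*t^2))
        (-1 * Real.exp (-(1/2:ℝ)*x^2) + -x * (Real.exp (-(1/2:ℝ)*x^2) * (-(1/2:ℝ) * (2 * x^1)))) x :=
      h1.mul h2
    convert h3 using 1
    ring
  have hint : IntegrableOn (fun x : ℝ =>
      Real.exp (-(1/2:ℝ)*x^2) * (x*x) - Real.exp (-(1/2:ℝ)*x^2)) (Set.Ioi 0) :=
    (int_sq_exp'.sub int_exp').integrableOn
  have htend : Filter.Tendsto (fun t : ℝ => -t * Real.exp (-(1/2:ℝ)*t^2)) Filter.atTop (nhds 0) := by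
    have h := (rpow_mul_exp_neg_mul_sq_isLittleO_exp_neg (b := (1/2:ℝ)) (by norm_num) 1)
    have h0 : Filter.Tendsto (fun x : ℝ => Real.exp (-(1/2) * x)) Filter.atTop (nhds 0) :=
      Real.tendsto_exp_atBot.comp (Filter.Tendsto.const_mul_atTop_of_neg (by norm_num) tendsto_id)
    have h1 := h.trans_tendsto h0
    simp only [Real.rpow_one] at h1
    have := h1.neg
    simp only [neg_zero] at this
    convert this using 2 with t
    ring
  have hIoi := integral_Ioi_of_hasDerivAt_of_tendsto' hderiv hint htend
  simp only [neg_zero, zero_mul, sub_zero] at hIoi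
  have hsplit := integral_sub (int_sq_exp'.integrableOn (s := Set.Ioi 0))
      (int_exp'.integrableOn (s := Set.Ioi 0))
  rw [hsplit] at hIoi
  have hIoiEq : ∫ t in Set.Ioi (0:ℝ), Real.exp (-(1/2:ℝ)*t^2) * (t*t)
      = ∫ t in Set.Ioi (0:ℝ), Real.exp (-(1/2:ℝ)*t^2) := by linarith
  have e1 : ∫ t : ℝ, Real.exp (-(1/2:ℝ)*t^2) * (t*t)
      = 2 * ∫ t in Set.Ioi (0:ℝ), Real.exp (-(1/2:ℝ)*t^2) * (t*t) := by
    rw [← integral_comp_abs (f := fun t => Real.exp (-(1/2:ℝ)*t^2) * (t*t))]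
    congr 1
    funext t
    rw [sq_abs, abs_mul_abs_self]
  have e2 : ∫ t : ℝ, Real.exp (-(1/2:ℝ)*t^2)
      = 2 * ∫ t in Set.Ioi (0:ℝ), Real.exp (-(1/2:ℝ)*t^2) := by
    rw [← integral_comp_abs (f := fun t => Real.exp (-(1/2:ℝ)*t^2))]
    congr 1
    funext t
    rw [sq_abs]
  rw [e1, hIoiEq, ← e2, val_exp']

lemma integral_exp_quad' {p : ℕ} (M : Matrix (Fin p) (Fin p) ℝ) :
    ∫ x : Fin p → ℝ, Real.exp (-(1/2:ℝ) * (x ⬝ᵥ x)) * (x ⬝ᵥ (M *ᵥ x)) =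
      Real.sqrt (2 * Real.pi) ^ p * M.trace := by
  classical
  set g : Fin p → Fin p → Fin p → ℝ → ℝ := fun i j k t =>
    Real.exp (-(1/2:ℝ) * t ^ 2) * ((if k = i then t else 1) * (if k = j then t else 1)) with hg
  have hgint : ∀ i j k, Integrable (g i j k) := by
    intro i j k
    by_cases hi : k = i
    · subst hi
      by_cases hj : k = j
      · subst hj
        simp only [hg, if_pos rfl]
        exact int_sq_exp'
      · simp only [hg, if_pos rfl, if_neg hj, mul_one]
        exact int_mul_exp'
    · by_cases hj : k = j
      · subst hj
        simp only [hg, if_pos rfl, if_neg hi, one_mul]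
        exact int_mul_exp'
      · simp only [hg, if_neg hi, if_neg hj, mul_one]
        exact int_exp'
  have hIprod : ∀ i j, Integrable (fun x : Fin p → ℝ => ∏ k, g i j k (x k)) :=
    fun i j => Integrable.fintype_prod (fun k => hgint i j k)
  have hprodite : ∀ (x : Fin p → ℝ) (i : Fin p), (∏ k, (if k = i then x k else 1)) = x i := by
    intro x i
    rw [Finset.prod_ite_eq']
    simp
  have hprod : ∀ (i j : Fin p) (x : Fin p → ℝ),
      (∏ k, g i j k (x k)) = Real.exp (-(1/2:ℝ) * (x ⬝ᵥ x)) * (x i * x j) := by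
    intro i j x
    simp only [hg]
    rw [Finset.prod_mul_distrib, Finset.prod_mul_distrib]
    congr 1
    · rw [← Real.exp_sum]
      congr 1
      rw [dotProduct, Finset.mul_sum]
      exact Finset.sum_congr rfl fun k _ => by ring
    · rw [hprodite, hprodite]
  have hexpand : ∀ x : Fin p → ℝ, Real.exp (-(1/2:ℝ) * (x ⬝ᵥ x)) * (x ⬝ᵥ (M *ᵥ x)) =
      ∑ i, ∑ j, M i j * ∏ k, g i j k (x k) := by
    intro x
    simp only [hprod]
    simp only [dotProduct, mulVec, Finset.mul_sum, Finset.sum_mul]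
    refine Finset.sum_congr rfl fun i _ => ?_
    refine Finset.sum_congr rfl fun j _ => ?_
    ring
  calc ∫ x : Fin p → ℝ, Real.exp (-(1/2:ℝ) * (x ⬝ᵥ x)) * (x ⬝ᵥ (M *ᵥ x))
      = ∫ x : Fin p → ℝ, ∑ i, ∑ j, M i j * ∏ k, g i j k (x k) := by
        simp only [hexpand]
    _ = ∑ i, ∑ j, M i j * ∫ x : Fin p → ℝ, ∏ k, g i j k (x k) := by
        rw [integral_finset_sum _ (fun i _ =>
          integrable_finset_sum _ (fun j _ => (hIprod i j).const_mul (M i j)))]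
        refine Finset.sum_congr rfl fun i _ => ?_
        rw [integral_finset_sum _ (fun j _ => (hIprod i j).const_mul (M i j))]
        exact Finset.sum_congr rfl fun j _ => integral_const_mul _ _
    _ = ∑ i, ∑ j, M i j * (if j = i then Real.sqrt (2 * Real.pi) ^ p else 0) := by
        refine Finset.sum_congr rfl fun i _ => Finset.sum_congr rfl fun j _ => ?_
        congr 1
        rw [integral_fintype_prod_volume_eq_prod (f := fun k => g i j k)]
        by_cases hij : j = i
        · subst hij
          rw [if_pos rfl]
          have hv : ∀ k, (∫ t : ℝ, g j j k t) = Real.sqrt (2 * Real.pi) := by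
            intro k
            by_cases hk : k = j
            · subst hk
              simp only [hg, if_pos rfl]
              exact val_sq'
            · simp only [hg, if_neg hk, mul_one]
              exact val_exp'
          rw [Finset.prod_congr rfl fun k _ => hv k, Finset.prod_const, Finset.card_univ,
            Fintype.card_fin]
        · rw [if_neg hij]
          apply Finset.prod_eq_zero (Finset.mem_univ i)
          have : (fun t : ℝ => g i j i t) = fun t : ℝ => Real.exp (-(1/2:ℝ) * t ^ 2) * t := by
            funext t
            have hne : ¬ i = j := fun h => hij h.symm
            simp [hg, hne]
          rw [this, val_odd']
    _ = Real.sqrt (2 * Real.pi) ^ p * M.trace := by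
        simp only [mul_ite, mul_zero]
        rw [Finset.sum_congr rfl fun i _ => Finset.sum_ite_eq' Finset.univ i
          (fun j => M i j * Real.sqrt (2 * Real.pi) ^ p)]
        simp only [Finset.mem_univ, if_pos]
        rw [← Finset.sum_mul, mul_comm]
        rfl


lemma cont_quad' {p : ℕ} (A : Matrix (Fin p) (Fin p) ℝ) :
    Continuous fun z : Fin p → ℝ => z ⬝ᵥ (A *ᵥ z) := by
  have : (fun z : Fin p → ℝ => z ⬝ᵥ (A *ᵥ z)) =
      fun z : Fin p → ℝ => ∑ i, z i * ∑ j, A i j * z j := rfl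
  rw [this]
  refine continuous_finset_sum _ fun i _ => (continuous_apply i).mul ?_
  exact continuous_finset_sum _ fun j _ => continuous_const.mul (continuous_apply j)

lemma integral_comp_mulVec' {p : ℕ} (T : Matrix (Fin p) (Fin p) ℝ) (hT : T.det ≠ 0)
    (f : (Fin p → ℝ) → ℝ) (hf : Continuous f) :
    ∫ y : Fin p → ℝ, f y = |T.det| * ∫ x : Fin p → ℝ, f (T *ᵥ x) := by
  have hmap := Real.map_matrix_volume_pi_eq_smul_volume_pi (M := T) hT
  have h1 : (volume : Measure (Fin p → ℝ)) =
      ENNReal.ofReal |T.det| • Measure.map (Matrix.toLin' T) volume := by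
    rw [hmap, smul_smul, ← ENNReal.ofReal_mul (abs_nonneg _), abs_inv,
      mul_inv_cancel₀ (abs_ne_zero.mpr hT), ENNReal.ofReal_one, one_smul]
  conv_lhs => rw [h1]
  rw [integral_smul_measure, ENNReal.toReal_ofReal (abs_nonneg _)]
  rw [integral_map ((Matrix.toLin' T).continuous_of_finiteDimensional).measurable.aemeasurable
    hf.aestronglyMeasurable]
  simp only [Matrix.toLin'_apply, smul_eq_mul]

end Auxiliary

/-- for any `p×p` matrix `B`,
`∫ φ_{μ,V}(y)^{1+α} (y−μ)ᵀ B (y−μ) dy = (2π)^{−pα/2}(det V)^{−α/2}(1+α)^{−p/2−1} Tr(VB)`. -/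
theorem integral_gaussianPdf_rpow_quadForm {p : ℕ}
    (V : Matrix (Fin p) (Fin p) ℝ) (hVsymm : V.IsSymm) (hVpd : V.PosDef)
    (μ : Fin p → ℝ) (α : ℝ) (hα : 0 ≤ α) (B : Matrix (Fin p) (Fin p) ℝ) :
    ∫ y : Fin p → ℝ, gaussianPdf V μ y ^ (1 + α) * ((y - μ) ⬝ᵥ (B *ᵥ (y - μ))) =
      (2 * Real.pi) ^ (-(p : ℝ) * α / 2) * V.det ^ (-α / 2) *
        (1 + α) ^ (-(p : ℝ) / 2 - 1) * (V * B).trace := by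
  classical
  have h1α : (0:ℝ) < 1 + α := by linarith
  have hdet : (0:ℝ) < V.det := hVpd.det_pos
  have h2π : (0:ℝ) < 2 * Real.pi := by positivity
  -- square root of V
  open scoped MatrixOrder in
  set S : Matrix (Fin p) (Fin p) ℝ := CFC.sqrt V with hSdef
  open scoped MatrixOrder in
  have hS : S.PosSemidef := (CFC.sqrt_nonneg V).posSemidef
  open scoped MatrixOrder in
  have hSS : S * S = V := CFC.sqrt_mul_sqrt_self V hVpd.posSemidef.nonneg
  have hST : Sᵀ = S := by
    have h : Sᴴ = S := hS.1
    rwa [Matrix.conjTranspose_eq_transpose_of_trivial] at h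
  have hSdet0 : S.det ≠ 0 := by
    intro h
    have : V.det = 0 := by rw [← hSS, Matrix.det_mul, h, mul_zero]
    exact hdet.ne' this
  have hSdetnn : (0:ℝ) ≤ S.det := by
    rw [hS.1.det_eq_prod_eigenvalues]
    exact Finset.prod_nonneg fun i _ => by simpa using hS.eigenvalues_nonneg i
  have hSdetV : S.det = V.det ^ ((1:ℝ)/2) := by
    have h2 : S.det * S.det = V.det := by rw [← Matrix.det_mul, hSS]
    rw [← Real.sqrt_eq_rpow, ← h2, Real.sqrt_mul_self hSdetnn]
  -- scaling constant
  set c : ℝ := (1+α) ^ (-(1:ℝ)/2) with hc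
  have hcpos : (0:ℝ) < c := Real.rpow_pos_of_pos h1α _
  have hcc : c * c = (1+α)⁻¹ := by
    rw [hc, ← Real.rpow_add h1α, show (-(1:ℝ)/2 + -(1:ℝ)/2) = -1 by norm_num, Real.rpow_neg_one]
  set T : Matrix (Fin p) (Fin p) ℝ := c • S with hT
  have hTdet : T.det = c ^ p * S.det := by
    rw [hT, Matrix.det_smul, Fintype.card_fin]
  have hTdet0 : T.det ≠ 0 := by
    rw [hTdet]; exact mul_ne_zero (pow_ne_zero _ hcpos.ne') hSdet0
  have hTabs : |T.det| = c ^ p * S.det := by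
    rw [hTdet, abs_of_nonneg (mul_nonneg (pow_nonneg hcpos.le _) hSdetnn)]
  -- S * V⁻¹ * S = 1
  have hU : IsUnit S.det := isUnit_iff_ne_zero.mpr hSdet0
  have hid : S * V⁻¹ * S = 1 := by
    rw [← hSS, Matrix.mul_inv_rev, ← Matrix.mul_assoc, Matrix.mul_nonsing_inv S hU,
      Matrix.one_mul, Matrix.nonsing_inv_mul S hU]
  -- quadratic form identity
  have hdot : ∀ (A : Matrix (Fin p) (Fin p) ℝ) (x : Fin p → ℝ),
      (T *ᵥ x) ⬝ᵥ (A *ᵥ (T *ᵥ x)) = (c*c) * (x ⬝ᵥ ((S * A * S) *ᵥ x)) := by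
    intro A x
    rw [hT, Matrix.smul_mulVec, Matrix.mulVec_smul, smul_dotProduct,
      dotProduct_smul, smul_eq_mul, smul_eq_mul, ← mul_assoc]
    congr 1
    rw [Matrix.mulVec_mulVec]
    have hx : S *ᵥ x = x ᵥ* S := by rw [← Matrix.mulVec_transpose, hST]
    rw [hx, ← Matrix.dotProduct_mulVec, Matrix.mulVec_mulVec, ← Matrix.mul_assoc]
  -- pdf rpow rewrite
  have hpdf : ∀ y : Fin p → ℝ, gaussianPdf V μ y ^ (1+α) =
      (2*Real.pi) ^ (-(p:ℝ)/2 * (1+α)) * (V.det ^ (-(1:ℝ)/2 * (1+α)) *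
        Real.exp (-(1/2:ℝ) * ((1+α) * ((y-μ) ⬝ᵥ (V⁻¹ *ᵥ (y-μ)))))) := by
    intro y
    rw [gaussianPdf, Real.mul_rpow (by positivity) (Real.exp_pos _).le,
      Real.mul_rpow (by positivity) (by positivity),
      ← Real.rpow_mul h2π.le, ← Real.rpow_mul hdet.le, ← Real.exp_mul, mul_assoc]
    congr 2
    ring
  simp only [hpdf, mul_assoc]
  rw [integral_const_mul, integral_const_mul]
  -- translation
  set G : (Fin p → ℝ) → ℝ := fun z =>
    Real.exp (-(1/2:ℝ) * ((1+α) * (z ⬝ᵥ (V⁻¹ *ᵥ z)))) * (z ⬝ᵥ (B *ᵥ z)) with hG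
  have hGsub : (fun y : Fin p → ℝ =>
      Real.exp (-(1/2:ℝ) * ((1+α) * ((y-μ) ⬝ᵥ (V⁻¹ *ᵥ (y-μ))))) * ((y-μ) ⬝ᵥ (B *ᵥ (y-μ))))
      = fun y : Fin p → ℝ => G (y - μ) := rfl
  rw [hGsub, integral_sub_right_eq_self G μ]
  -- change of variables
  have hGcont : Continuous G := by
    refine Continuous.mul ?_ (cont_quad' B)
    exact Real.continuous_exp.comp (continuous_const.mul (continuous_const.mul (cont_quad' V⁻¹)))
  rw [integral_comp_mulVec' T hTdet0 G hGcont]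
  have hGT : ∀ x : Fin p → ℝ, G (T *ᵥ x) =
      (1+α)⁻¹ * (Real.exp (-(1/2:ℝ) * (x ⬝ᵥ x)) * (x ⬝ᵥ ((S * B * S) *ᵥ x))) := by
    intro x
    rw [hG]
    simp only
    rw [hdot V⁻¹ x, hdot B x, hid, Matrix.one_mulVec, hcc]
    rw [show (1+α) * ((1+α)⁻¹ * (x ⬝ᵥ x)) = x ⬝ᵥ x by
      rw [← mul_assoc, mul_inv_cancel₀ h1α.ne', one_mul]]
    ring
  simp only [hGT]
  rw [integral_const_mul, integral_exp_quad' (S * B * S)]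
  have htr : (S * B * S).trace = (V * B).trace := by
    rw [Matrix.trace_mul_comm, ← Matrix.mul_assoc, hSS]
  have hsq : Real.sqrt (2*Real.pi) ^ p = (2*Real.pi) ^ ((p:ℝ)/2) := by
    rw [Real.sqrt_eq_rpow, ← Real.rpow_natCast ((2*Real.pi) ^ ((1:ℝ)/2)) p,
      ← Real.rpow_mul h2π.le]
    congr 1
    ring
  have hcp : c ^ p = (1+α) ^ (-(p:ℝ)/2) := by
    rw [hc, ← Real.rpow_natCast ((1+α) ^ (-(1:ℝ)/2)) p, ← Real.rpow_mul h1α.le]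
    congr 1
    ring
  rw [htr, hsq, hTabs, hcp, hSdetV]
  rw [show ((1:ℝ)+α)⁻¹ = (1+α) ^ (-1:ℝ) from (Real.rpow_neg_one _).symm]
  have e1 : (2*Real.pi) ^ (-(p:ℝ)/2 * (1+α)) * (2*Real.pi) ^ ((p:ℝ)/2)
      = (2*Real.pi) ^ (-(p:ℝ) * α / 2) := by
    rw [← Real.rpow_add h2π]; congr 1; ring
  have e2 : V.det ^ (-(1:ℝ)/2 * (1+α)) * V.det ^ ((1:ℝ)/2) = V.det ^ (-α/2) := by
    rw [← Real.rpow_add hdet]; congr 1; ring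
  have e3 : (1+α) ^ (-(p:ℝ)/2) * (1+α) ^ (-1:ℝ) = (1+α) ^ (-(p:ℝ)/2 - 1) := by
    rw [← Real.rpow_add h1α, show -(p:ℝ)/2 + -1 = -(p:ℝ)/2 - 1 by ring]
  linear_combination
    (V.det ^ (-(1:ℝ)/2*(1+α)) * V.det ^ ((1:ℝ)/2) *
      ((1+α) ^ (-(p:ℝ)/2) * (1+α) ^ (-1:ℝ)) * (V*B).trace) * e1 +
    ((2*Real.pi) ^ (-(p:ℝ)*α/2) * ((1+α) ^ (-(p:ℝ)/2) * (1+α) ^ (-1:ℝ)) * (V*B).trace) * e2 +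
    ((2*Real.pi) ^ (-(p:ℝ)*α/2) * V.det ^ (-α/2) * (V*B).trace) * e3
end

section
/- Let V be a symmetric positive definite real p×p matrix, μ ∈ ℝ^p, α > 0, and U a symmetric real p×p matrix, and write η_α = (2π)^{−pα/2}(det V)^{−α/2}. Then the per-observation MDPDE estimating function for a variance component is unbiased at the true parameter: ∫_{ℝ^p} φ_{μ,V}(y) · { −(α/2) η_α (1+α)^{−p/2} Tr(V^{−1}U) + (α/2)(1 + 1/α) η_α e^{−(α/2)(y−μ)ᵀV^{−1}(y−μ)} [ Tr(V^{−1}U) − (y−μ)ᵀ V^{−1} U V^{−1} (y−μ) ] } dy = 0. -/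
open Matrix MeasureTheory Real

/- ### Auxiliary one-dimensional integrals -/

lemma int1d_odd (b : ℝ) : ∫ x : ℝ, x * Real.exp (-b * x ^ 2) = 0 := by
  have h := integral_neg_eq_self (fun x : ℝ => x * Real.exp (-b * x ^ 2)) (volume : Measure ℝ)
  simp only [neg_sq, neg_mul, integral_neg] at h
  simp only [neg_mul]
  linarith

lemma int1d_sq {b : ℝ} (hb : 0 < b) :
    ∫ x : ℝ, x ^ 2 * Real.exp (-b * x ^ 2) = Real.sqrt (π / b) * (2 * b)⁻¹ := by
  have h1 : ∫ x : ℝ, x ^ 2 * Real.exp (-b * x ^ 2)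
      = 2 * ∫ x in Set.Ioi (0:ℝ), x ^ 2 * Real.exp (-b * x ^ 2) := by
    rw [← integral_comp_abs (f := fun x => x ^ 2 * Real.exp (-b * x ^ 2))]
    congr 1 with x
    rw [sq_abs]
  have h2 : ∫ x in Set.Ioi (0:ℝ), x ^ 2 * Real.exp (-b * x ^ 2)
      = b ^ (-(3:ℝ)/2) * (1/2) * Real.Gamma (3/2) := by
    have := integral_rpow_mul_exp_neg_mul_rpow (p := 2) (q := 2) (by norm_num) (by norm_num) hb
    simp only [show ((2:ℝ)) = ((2:ℕ):ℝ) by norm_num, Real.rpow_natCast] at this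
    rw [show ((2:ℕ):ℝ) = (2:ℝ) by norm_num] at this
    rw [this]
    norm_num
  have hG : Real.Gamma (3/2) = Real.sqrt π / 2 := by
    rw [show (3/2 : ℝ) = 1/2 + 1 by norm_num, Real.Gamma_add_one (by norm_num),
      Real.Gamma_one_half_eq]
    ring
  have hb' : (0:ℝ) < Real.sqrt b := Real.sqrt_pos.mpr hb
  have hsq : Real.sqrt b * Real.sqrt b = b := Real.mul_self_sqrt hb.le
  have hr : b ^ (-(3:ℝ)/2) = (b * Real.sqrt b)⁻¹ := by
    rw [show (-(3:ℝ)/2) = -(3/2) by ring, Real.rpow_neg hb.le]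
    congr 1
    rw [show (3/2:ℝ) = 1 + 1/2 by norm_num, Real.rpow_add hb, Real.rpow_one,
      ← Real.sqrt_eq_rpow]
  rw [h1, h2, hG, hr, Real.sqrt_div pi_pos.le]
  field_simp

/- ### Linear change of variables -/

lemma integral_comp_mulVec {p : ℕ} (B : Matrix (Fin p) (Fin p) ℝ) (hB : IsUnit B.det)
    (g : (Fin p → ℝ) → ℝ) :
    ∫ y : Fin p → ℝ, g y = |B.det| * ∫ z : Fin p → ℝ, g (B *ᵥ z) := by
  have hdet : LinearMap.det (Matrix.toLin' B) = B.det := LinearMap.det_toLin' B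
  have hne : LinearMap.det (Matrix.toLin' B) ≠ 0 := by rw [hdet]; exact hB.ne_zero
  have hmap := Measure.map_linearMap_addHaar_pi_eq_smul_addHaar hne (volume : Measure (Fin p → ℝ))
  have hinv : Invertible B := B.invertibleOfIsUnitDet hB
  let e : (Fin p → ℝ) ≃ₗ[ℝ] (Fin p → ℝ) := B.toLinearEquiv' hinv
  have he : (fun z => B *ᵥ z) = (e : (Fin p → ℝ) → (Fin p → ℝ)) := by
    funext z; simp [e, Matrix.toLinearEquiv'_apply]
    rfl
  have hemb : MeasurableEmbedding (fun z => B *ᵥ z) := by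
    rw [he]
    exact e.toContinuousLinearEquiv.toHomeomorph.measurableEmbedding
  have h1 : ∫ y, g y ∂(Measure.map (Matrix.toLin' B) volume) = ∫ z, g (B *ᵥ z) := by
    have : (Matrix.toLin' B : (Fin p → ℝ) → (Fin p → ℝ)) = fun z => B *ᵥ z := by
      funext z; simp [Matrix.toLin'_apply]
    rw [this]
    exact hemb.integral_map g
  rw [hmap] at h1
  rw [integral_smul_measure] at h1
  rw [hdet] at h1
  have habs : (ENNReal.ofReal |B.det⁻¹|).toReal = |B.det|⁻¹ := by
    rw [ENNReal.toReal_ofReal (abs_nonneg _), abs_inv]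
  rw [habs, smul_eq_mul] at h1
  have hd : |B.det| ≠ 0 := by simpa using hB.ne_zero
  rw [← h1, ← mul_assoc, mul_inv_cancel₀ hd, one_mul]

/- ### Gaussian integrals on `ℝ^p` -/

variable {p : ℕ}

lemma dot_eq_sum (z : Fin p → ℝ) : z ⬝ᵥ z = ∑ i, (z i) ^ 2 := by
  simp [dotProduct, sq]

lemma gauss_prod {c : ℝ} (z : Fin p → ℝ) :
    Real.exp (-c * (z ⬝ᵥ z)) = ∏ i, Real.exp (-c * (z i) ^ 2) := by
  rw [← Real.exp_sum, dot_eq_sum, Finset.mul_sum]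

lemma J0 {c : ℝ} (hc : 0 < c) :
    ∫ z : Fin p → ℝ, Real.exp (-c * (z ⬝ᵥ z)) = Real.sqrt (π / c) ^ p := by
  calc ∫ z : Fin p → ℝ, Real.exp (-c * (z ⬝ᵥ z))
      = ∫ z : Fin p → ℝ, ∏ i, Real.exp (-c * (z i) ^ 2) := by
        congr 1; funext z; exact gauss_prod z
    _ = (∫ x : ℝ, Real.exp (-c * x ^ 2)) ^ (Fintype.card (Fin p)) :=
        integral_fintype_prod_eq_pow (ι := Fin p) (fun x : ℝ => Real.exp (-c * x ^ 2))
    _ = Real.sqrt (π / c) ^ p := by rw [integral_gaussian, Fintype.card_fin]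

lemma intJ0 {c : ℝ} (hc : 0 < c) :
    Integrable (fun z : Fin p → ℝ => Real.exp (-c * (z ⬝ᵥ z))) := by
  have : (fun z : Fin p → ℝ => Real.exp (-c * (z ⬝ᵥ z)))
      = fun z : Fin p → ℝ => ∏ i, Real.exp (-c * (z i) ^ 2) := by
    funext z; exact gauss_prod z
  rw [this]
  exact Integrable.fintype_prod (f := fun (_ : Fin p) (x : ℝ) => Real.exp (-c * x ^ 2))
    (fun i => integrable_exp_neg_mul_sq hc)

/-- the factor functions -/
noncomputable def fk {p : ℕ} (c : ℝ) (i j k : Fin p) : ℝ → ℝ :=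
  fun x => (if k = i then x else 1) * (if k = j then x else 1) * Real.exp (-c * x ^ 2)

lemma fk_prod {c : ℝ} (i j : Fin p) (z : Fin p → ℝ) :
    (∏ k, fk c i j k (z k)) = Real.exp (-c * (z ⬝ᵥ z)) * (z i * z j) := by
  unfold fk
  rw [Finset.prod_mul_distrib, Finset.prod_mul_distrib, gauss_prod z]
  simp [Finset.prod_ite_eq' Finset.univ]
  ring

lemma fk_integrable {c : ℝ} (hc : 0 < c) (i j k : Fin p) : Integrable (fk c i j k) := by
  unfold fk
  have hsq : Integrable (fun x : ℝ => x ^ 2 * Real.exp (-c * x ^ 2)) := by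
    have h2 : Integrable (fun x : ℝ => x ^ (2:ℝ) * Real.exp (-c * x ^ 2)) :=
      integrable_rpow_mul_exp_neg_mul_sq hc (by norm_num)
    refine h2.congr (Filter.Eventually.of_forall fun x => ?_)
    show x ^ (2:ℝ) * Real.exp (-c * x ^ 2) = x ^ 2 * Real.exp (-c * x ^ 2)
    rw [show ((2:ℝ)) = ((2:ℕ):ℝ) by norm_num, Real.rpow_natCast]
  by_cases hki : k = i
  · subst hki
    by_cases hkj : k = j
    · subst hkj
      simp only [if_pos rfl]
      exact hsq.congr (Filter.Eventually.of_forall fun x => by simp; ring)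
    · simp only [if_pos rfl, if_neg hkj]
      simpa using integrable_mul_exp_neg_mul_sq hc
  · by_cases hkj : k = j
    · subst hkj
      simp only [if_neg hki, if_pos rfl]
      have := integrable_mul_exp_neg_mul_sq hc
      refine this.congr (Filter.Eventually.of_forall fun x => by simp)
    · simp only [if_neg hki, if_neg hkj]
      simpa using integrable_exp_neg_mul_sq hc

lemma intK {c : ℝ} (hc : 0 < c) (i j : Fin p) :
    Integrable (fun z : Fin p → ℝ => Real.exp (-c * (z ⬝ᵥ z)) * (z i * z j)) := by
  have h := Integrable.fintype_prod (f := fk c i j) (fun k => fk_integrable hc i j k)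
  exact h.congr (Filter.Eventually.of_forall fun z => fk_prod i j z)

lemma Kij {c : ℝ} (hc : 0 < c) (i j : Fin p) :
    ∫ z : Fin p → ℝ, Real.exp (-c * (z ⬝ᵥ z)) * (z i * z j)
      = if i = j then Real.sqrt (π / c) ^ p * (2 * c)⁻¹ else 0 := by
  have hrw : ∫ z : Fin p → ℝ, Real.exp (-c * (z ⬝ᵥ z)) * (z i * z j)
      = ∫ z : Fin p → ℝ, ∏ k, fk c i j k (z k) := by
    congr 1; funext z; rw [fk_prod]
  rw [hrw, volume_pi, integral_fintype_prod_eq_prod (ι := Fin p) (fk c i j)]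
  by_cases hij : i = j
  · subst hij
    simp only [if_pos rfl]
    have hfk : ∀ k, (∫ x, fk c i i k x)
        = Real.sqrt (π / c) * (if k = i then (2 * c)⁻¹ else 1) := by
      intro k
      by_cases hki : k = i
      · subst hki
        simp only [if_pos rfl]
        unfold fk
        simp only [if_pos rfl]
        calc (∫ x : ℝ, x * x * Real.exp (-c * x ^ 2))
            = ∫ x : ℝ, x ^ 2 * Real.exp (-c * x ^ 2) := by congr 1; funext x; ring
          _ = Real.sqrt (π / c) * (2 * c)⁻¹ := int1d_sq hc
      · simp only [if_neg hki, mul_one]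
        unfold fk
        simp only [if_neg hki, one_mul, mul_one]
        exact integral_gaussian c
    rw [Finset.prod_congr rfl (fun k _ => hfk k), Finset.prod_mul_distrib,
      Finset.prod_const, Finset.prod_ite_eq' Finset.univ i (fun _ => (2 * c)⁻¹)]
    simp [Fintype.card_fin]
  · simp only [if_neg hij]
    apply Finset.prod_eq_zero (Finset.mem_univ i)
    unfold fk
    simp only [if_pos rfl, if_neg (fun h : i = j => hij h), mul_one]
    exact int1d_odd c

lemma dot_quad_sum (N : Matrix (Fin p) (Fin p) ℝ) (z : Fin p → ℝ) :
    z ⬝ᵥ (N *ᵥ z) = ∑ i, ∑ j, N i j * (z i * z j) := by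
  simp only [dotProduct, Matrix.mulVec, Finset.mul_sum]
  exact Finset.sum_congr rfl fun i _ => Finset.sum_congr rfl fun j _ => by ring

lemma exp_quad_sum {c : ℝ} (N : Matrix (Fin p) (Fin p) ℝ) (z : Fin p → ℝ) :
    Real.exp (-c * (z ⬝ᵥ z)) * (z ⬝ᵥ (N *ᵥ z))
      = ∑ i, ∑ j, N i j * (Real.exp (-c * (z ⬝ᵥ z)) * (z i * z j)) := by
  rw [dot_quad_sum N z, Finset.mul_sum]
  refine Finset.sum_congr rfl fun i _ => ?_
  rw [Finset.mul_sum]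
  exact Finset.sum_congr rfl fun j _ => by ring

lemma intJ2 {c : ℝ} (hc : 0 < c) (N : Matrix (Fin p) (Fin p) ℝ) :
    Integrable (fun z : Fin p → ℝ => Real.exp (-c * (z ⬝ᵥ z)) * (z ⬝ᵥ (N *ᵥ z))) := by
  have hfun : (fun z : Fin p → ℝ => Real.exp (-c * (z ⬝ᵥ z)) * (z ⬝ᵥ (N *ᵥ z)))
      = fun z : Fin p → ℝ => ∑ i, ∑ j, N i j * (Real.exp (-c * (z ⬝ᵥ z)) * (z i * z j)) := by
    funext z; exact exp_quad_sum N z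
  rw [hfun]
  exact integrable_finset_sum _ (fun i _ => integrable_finset_sum _
    (fun j _ => (intK hc i j).const_mul _))

lemma J2 {c : ℝ} (hc : 0 < c) (N : Matrix (Fin p) (Fin p) ℝ) :
    ∫ z : Fin p → ℝ, Real.exp (-c * (z ⬝ᵥ z)) * (z ⬝ᵥ (N *ᵥ z))
      = Real.sqrt (π / c) ^ p * (2 * c)⁻¹ * N.trace := by
  calc ∫ z : Fin p → ℝ, Real.exp (-c * (z ⬝ᵥ z)) * (z ⬝ᵥ (N *ᵥ z))
      = ∫ z : Fin p → ℝ, ∑ i, ∑ j, N i j * (Real.exp (-c * (z ⬝ᵥ z)) * (z i * z j)) := by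
        congr 1; funext z; exact exp_quad_sum N z
    _ = ∑ i, ∑ j, N i j * ∫ z : Fin p → ℝ, Real.exp (-c * (z ⬝ᵥ z)) * (z i * z j) := by
        rw [integral_finset_sum (f := fun i z => ∑ j, N i j * (Real.exp (-c * (z ⬝ᵥ z)) * (z i * z j))) _ (fun i _ => integrable_finset_sum _
          (fun j _ => (intK hc i j).const_mul _))]
        congr 1; funext i
        rw [integral_finset_sum _ (fun j _ => (intK hc i j).const_mul _)]
        congr 1; funext j
        exact integral_const_mul _ _
    _ = ∑ i, N i i * (Real.sqrt (π / c) ^ p * (2 * c)⁻¹) := by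
        congr 1; funext i
        rw [Finset.sum_congr rfl (fun j _ => by rw [Kij hc i j])]
        simp [Finset.sum_ite_eq' Finset.univ i]
    _ = Real.sqrt (π / c) ^ p * (2 * c)⁻¹ * N.trace := by
        rw [Matrix.trace, ← Finset.sum_mul]
        simp [Matrix.diag, mul_comm]

/- ### Quadratic form under a linear substitution -/

lemma quad_comp (A M : Matrix (Fin p) (Fin p) ℝ) (x : Fin p → ℝ) :
    (A *ᵥ x) ⬝ᵥ (M *ᵥ (A *ᵥ x)) = x ⬝ᵥ ((Aᵀ * M * A) *ᵥ x) := by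
  rw [Matrix.dotProduct_mulVec, Matrix.dotProduct_mulVec, Matrix.dotProduct_mulVec,
    ← Matrix.vecMul_vecMul, ← Matrix.vecMul_vecMul, Matrix.vecMul_transpose]

/- ### Main theorem -/

open scoped MatrixOrder

/-- with `η_α = (2π)^{−pα/2}(det V)^{−α/2}`, the per-observation MDPDE
estimating function for a variance component is unbiased at the true parameter:
`∫ φ_{μ,V}(y) { −(α/2)η_α(1+α)^{−p/2} Tr(V⁻¹U)`
`  + (α/2)(1+1/α) η_α e^{−(α/2)(y−μ)ᵀV⁻¹(y−μ)} [Tr(V⁻¹U) − (y−μ)ᵀV⁻¹UV⁻¹(y−μ)] } dy = 0`. -/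
theorem mdpde_variance_estimating_equation_unbiased {p : ℕ}
    (V : Matrix (Fin p) (Fin p) ℝ) (hVsymm : V.IsSymm) (hVpd : V.PosDef)
    (μ : Fin p → ℝ) (α : ℝ) (hα : 0 < α)
    (U : Matrix (Fin p) (Fin p) ℝ) (hUsymm : U.IsSymm) :
    ∫ y : Fin p → ℝ,
      gaussianPdf V μ y *
        (-(α / 2) * ((2 * Real.pi) ^ (-(p : ℝ) * α / 2) * V.det ^ (-α / 2)) *
            (1 + α) ^ (-(p : ℝ) / 2) * (V⁻¹ * U).trace
          + (α / 2) * (1 + 1 / α) *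
              ((2 * Real.pi) ^ (-(p : ℝ) * α / 2) * V.det ^ (-α / 2)) *
              Real.exp (-(α / 2) * ((y - μ) ⬝ᵥ (V⁻¹ *ᵥ (y - μ)))) *
              ((V⁻¹ * U).trace - ((y - μ) ⬝ᵥ ((V⁻¹ * U * V⁻¹) *ᵥ (y - μ))))) = 0 := by
  classical
  have h1α : (0:ℝ) < 1 + α := by linarith
  have hc₁ : (0:ℝ) < (1 + α) / 2 := by linarith
  have hhalf : (0:ℝ) < (1/2:ℝ) := by norm_num
  -- matrix setup
  set B := CFC.sqrt V with hBdef
  have hBB : B * B = V := CFC.sqrt_mul_sqrt_self V hVpd.posSemidef.nonneg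
  have hBsymm : Bᵀ = B := by
    have h := (CFC.sqrt_nonneg V).posSemidef.isHermitian
    simpa [Matrix.IsSymm] using h
  have hdetV : 0 < V.det := hVpd.det_pos
  have hdetB : IsUnit B.det := by
    have hBV : B.det * B.det = V.det := by rw [← Matrix.det_mul, hBB]
    have hne : B.det ≠ 0 := fun h => by simp [h] at hBV; exact absurd hBV.symm hdetV.ne'
    exact isUnit_iff_ne_zero.mpr hne
  have hdetVu : IsUnit V.det := isUnit_iff_ne_zero.mpr hdetV.ne'
  have hBVB : B * V⁻¹ * B = 1 := by
    rw [← hBB, Matrix.mul_inv_rev]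
    have h1 : B * (B⁻¹ * B⁻¹) * B = (B * B⁻¹) * (B⁻¹ * B) := by noncomm_ring
    rw [h1, Matrix.mul_nonsing_inv _ hdetB, Matrix.nonsing_inv_mul _ hdetB, one_mul]
  set M : Matrix (Fin p) (Fin p) ℝ := V⁻¹ * U * V⁻¹ with hMdef
  set N : Matrix (Fin p) (Fin p) ℝ := B * M * B with hNdef
  have htrace : N.trace = (V⁻¹ * U).trace := by
    have hMV : M * V = V⁻¹ * U := by
      rw [hMdef, mul_assoc, Matrix.nonsing_inv_mul _ hdetVu, mul_one]
    calc (B * M * B).trace = (B * (M * B)).trace := by rw [mul_assoc]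
      _ = ((M * B) * B).trace := Matrix.trace_mul_comm _ _
      _ = (M * (B * B)).trace := by rw [mul_assoc]
      _ = (V⁻¹ * U).trace := by rw [hBB, hMV]
  have hQ : ∀ z : Fin p → ℝ, (B *ᵥ z) ⬝ᵥ (V⁻¹ *ᵥ (B *ᵥ z)) = z ⬝ᵥ z := by
    intro z
    rw [quad_comp, hBsymm, hBVB, Matrix.one_mulVec]
  have hq : ∀ z : Fin p → ℝ, (B *ᵥ z) ⬝ᵥ (M *ᵥ (B *ᵥ z)) = z ⬝ᵥ (N *ᵥ z) := by
    intro z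
    rw [quad_comp, hBsymm]
  -- abbreviations
  set T : ℝ := (V⁻¹ * U).trace with hT
  set η : ℝ := (2 * Real.pi) ^ (-(p : ℝ) * α / 2) * V.det ^ (-α / 2) with hη
  set C₀ : ℝ := (2 * Real.pi) ^ (-(p : ℝ) / 2) * V.det ^ (-(1:ℝ) / 2) with hC₀
  set w : ℝ := (1 + α) ^ (-(p : ℝ) / 2) with hw
  set A : ℝ := -(α / 2) * η * w * T with hA
  set Bc : ℝ := α / 2 * (1 + 1 / α) * η with hBc
  -- the function after centering
  set G : (Fin p → ℝ) → ℝ := fun x =>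
    (C₀ * A) * Real.exp (-(1/2:ℝ) * (x ⬝ᵥ (V⁻¹ *ᵥ x)))
      + ((C₀ * Bc * T) * Real.exp (-((1 + α)/2) * (x ⬝ᵥ (V⁻¹ *ᵥ x)))
        - (C₀ * Bc) * (Real.exp (-((1 + α)/2) * (x ⬝ᵥ (V⁻¹ *ᵥ x))) * (x ⬝ᵥ (M *ᵥ x)))) with hG
  have hexp2 : ∀ s : ℝ, Real.exp (-(1/2:ℝ) * s) * Real.exp (-(α/2) * s)
      = Real.exp (-((1 + α)/2) * s) := by
    intro s
    rw [← Real.exp_add]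
    congr 1
    ring
  have key : (fun y : Fin p → ℝ => gaussianPdf V μ y *
        (A + Bc * Real.exp (-(α / 2) * ((y - μ) ⬝ᵥ (V⁻¹ *ᵥ (y - μ)))) *
          (T - ((y - μ) ⬝ᵥ (M *ᵥ (y - μ)))))) = fun y => G (y - μ) := by
    funext y
    simp only [hG, gaussianPdf]
    rw [← hexp2 ((y - μ) ⬝ᵥ (V⁻¹ *ᵥ (y - μ)))]
    ring
  have hgoal : (∫ y : Fin p → ℝ, gaussianPdf V μ y *
        (A + Bc * Real.exp (-(α / 2) * ((y - μ) ⬝ᵥ (V⁻¹ *ᵥ (y - μ)))) *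
          (T - ((y - μ) ⬝ᵥ (M *ᵥ (y - μ)))))) = 0 := by
    rw [key, integral_sub_right_eq_self G μ, integral_comp_mulVec B hdetB G]
    have hGB : (fun z : Fin p → ℝ => G (B *ᵥ z)) = fun z =>
        (C₀ * A) * Real.exp (-(1/2:ℝ) * (z ⬝ᵥ z))
          + ((C₀ * Bc * T) * Real.exp (-((1 + α)/2) * (z ⬝ᵥ z))
            - (C₀ * Bc) * (Real.exp (-((1 + α)/2) * (z ⬝ᵥ z)) * (z ⬝ᵥ (N *ᵥ z)))) := by
      funext z
      simp only [hG]
      rw [hQ z, hq z]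
    rw [hGB]
    have i1 : Integrable (fun z : Fin p → ℝ =>
        (C₀ * A) * Real.exp (-(1/2:ℝ) * (z ⬝ᵥ z))) := (intJ0 hhalf).const_mul _
    have i2 : Integrable (fun z : Fin p → ℝ =>
        (C₀ * Bc * T) * Real.exp (-((1 + α)/2) * (z ⬝ᵥ z))) := (intJ0 hc₁).const_mul _
    have i3 : Integrable (fun z : Fin p → ℝ =>
        (C₀ * Bc) * (Real.exp (-((1 + α)/2) * (z ⬝ᵥ z)) * (z ⬝ᵥ (N *ᵥ z)))) :=
      (intJ2 hc₁ N).const_mul _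
    have i23 : Integrable (fun z : Fin p → ℝ =>
        (C₀ * Bc * T) * Real.exp (-((1 + α)/2) * (z ⬝ᵥ z))
          - (C₀ * Bc) * (Real.exp (-((1 + α)/2) * (z ⬝ᵥ z)) * (z ⬝ᵥ (N *ᵥ z)))) := i2.sub i3
    rw [integral_add i1 i23, integral_sub i2 i3, integral_const_mul, integral_const_mul,
      integral_const_mul, J0 hhalf, J0 hc₁, J2 hc₁ N, htrace]
    -- now pure arithmetic with rpow atoms
    have hs0 : Real.sqrt (π / (1/2:ℝ)) ^ p = Real.sqrt (2 * π) ^ p := by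
      norm_num [div_div_eq_mul_div, mul_comm]
    have hwinv : w = (Real.sqrt (1 + α) ^ p)⁻¹ := by
      rw [hw, show (-(p:ℝ)/2) = -((1/2) * (p:ℝ)) by ring, Real.rpow_neg h1α.le,
        Real.rpow_mul h1α.le, ← Real.sqrt_eq_rpow, Real.rpow_natCast]
    have hs1 : Real.sqrt (π / ((1 + α)/2)) ^ p
        = Real.sqrt (2 * π) ^ p * w := by
      rw [hwinv]
      rw [show π / ((1 + α)/2) = (2 * π) / (1 + α) by field_simp,
        Real.sqrt_div (by positivity) (1 + α), div_pow]
      rfl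
    rw [hs0, hs1]
    have hsa : (0:ℝ) < Real.sqrt (1 + α) := Real.sqrt_pos.mpr h1α
    have hw0 : w ≠ 0 := by
      rw [hwinv]
      positivity
    rw [hA, hBc]
    have hαne : α ≠ 0 := hα.ne'
    have h1αne : (1:ℝ) + α ≠ 0 := h1α.ne'
    field_simp
    ring
  -- identify the goal with hgoal
  convert hgoal using 3
end

section
/- Let V be a symmetric positive definite real p×p matrix, μ ∈ ℝ^p, α ≥ 0, and let A, B be symmetric real p×p matrices. Then ∫_{ℝ^p} φ_{μ,V}(y)^{1+α} · [(y−μ)ᵀ A (y−μ)] · [(y−μ)ᵀ B (y−μ)] dy = (2π)^{−pα/2} (det V)^{−α/2} (1+α)^{−p/2−2} · [ Tr(V A) Tr(V B) + 2 Tr(V A V B) ]. -/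
open Matrix MeasureTheory Real

noncomputable def mom (n : ℕ) : ℝ := ∫ t : ℝ, t ^ n * Real.exp (-(1/2 : ℝ) * t ^ 2)

lemma integrable_pow_gauss (n : ℕ) :
    Integrable (fun t : ℝ => t ^ n * Real.exp (-(1/2 : ℝ) * t ^ 2)) := by
  have h := integrable_rpow_mul_exp_neg_mul_sq (b := 1/2) (by norm_num) (s := (n : ℝ))
    (lt_of_lt_of_le neg_one_lt_zero (Nat.cast_nonneg n))
  simpa [Real.rpow_natCast] using h

lemma mom_odd (n : ℕ) (hn : Odd n) : mom n = 0 := by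
  have h := MeasureTheory.integral_neg_eq_self
    (fun t : ℝ => t ^ n * Real.exp (-(1/2 : ℝ) * t ^ 2)) (volume : Measure ℝ)
  have h2 : (∫ x : ℝ, (-x) ^ n * Real.exp (-(1/2 : ℝ) * (-x) ^ 2)) = - mom n := by
    simp only [hn.neg_pow, neg_sq, neg_mul, mom]
    exact integral_neg _
  rw [h2] at h
  have : (∫ x : ℝ, x ^ n * Real.exp (-(1/2 : ℝ) * x ^ 2)) = mom n := rfl
  rw [this] at h
  linarith [h]

lemma mom_even (n : ℕ) (hn : Even n) :
    mom n = ((1:ℝ)/2) ^ (-(((n:ℝ)) + 1)/2) * Real.Gamma (((n:ℝ) + 1)/2) := by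
  have habs : ∀ x : ℝ, |x| ^ n * Real.exp (-(1/2 : ℝ) * |x| ^ 2) =
      x ^ n * Real.exp (-(1/2 : ℝ) * x ^ 2) := by
    intro x; rw [hn.pow_abs, sq_abs]
  have h := integral_comp_abs (f := fun x : ℝ => x ^ n * Real.exp (-(1/2 : ℝ) * x ^ 2))
  simp only [habs] at h
  have h2 : ∫ x : ℝ in Set.Ioi 0, x ^ n * Real.exp (-(1/2 : ℝ) * x ^ 2)
      = ∫ x : ℝ in Set.Ioi 0, x ^ ((n:ℝ)) * Real.exp (-(1/2 : ℝ) * x ^ ((2:ℝ))) := by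
    refine setIntegral_congr_fun measurableSet_Ioi (fun x hx => ?_)
    rw [Real.rpow_natCast, show ((2:ℝ)) = ((2:ℕ):ℝ) by norm_num, Real.rpow_natCast]
  have h3 := integral_rpow_mul_exp_neg_mul_rpow (p := 2) (q := (n:ℝ)) (b := 1/2)
    (by norm_num) (lt_of_lt_of_le neg_one_lt_zero (Nat.cast_nonneg n)) (by norm_num)
  rw [mom, h, h2]
  rw [h3]
  ring


lemma half_rpow_neg (a : ℝ) : ((1:ℝ)/2) ^ (-a) = (2:ℝ) ^ a := by
  rw [one_div, ← Real.rpow_neg_one (2:ℝ), ← Real.rpow_mul (by norm_num)]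
  norm_num

lemma two_rpow_half : (2:ℝ) ^ ((1:ℝ)/2) = Real.sqrt 2 := by
  rw [Real.sqrt_eq_rpow]

lemma mom_zero : mom 0 = Real.sqrt (2 * Real.pi) := by
  have h := mom_even 0 Even.zero
  rw [show (-((↑(0:ℕ):ℝ) + 1)/2) = -((1:ℝ)/2) by norm_num] at h
  rw [h, half_rpow_neg, two_rpow_half]
  rw [show (((0:ℕ):ℝ) + 1)/2 = (1:ℝ)/2 by norm_num, Real.Gamma_one_half_eq,
    Real.sqrt_mul (by norm_num)]

lemma Gamma_three_half : Real.Gamma (3/2) = Real.sqrt Real.pi / 2 := by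
  rw [show (3/2:ℝ) = 1/2 + 1 by norm_num, Real.Gamma_add_one (by norm_num),
    Real.Gamma_one_half_eq]
  ring

lemma mom_two : mom 2 = Real.sqrt (2 * Real.pi) := by
  have h := mom_even 2 (by decide)
  rw [show (-((↑(2:ℕ):ℝ) + 1)/2) = -((3:ℝ)/2) by norm_num] at h
  rw [show ((↑(2:ℕ):ℝ) + 1)/2 = (3:ℝ)/2 by norm_num] at h
  rw [h, half_rpow_neg, Gamma_three_half,
    show (3/2:ℝ) = 1 + 1/2 by norm_num, Real.rpow_add (by norm_num), Real.rpow_one,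
    two_rpow_half, Real.sqrt_mul (by norm_num)]
  ring

lemma mom_four : mom 4 = 3 * Real.sqrt (2 * Real.pi) := by
  have h := mom_even 4 (by decide)
  rw [show (-((↑(4:ℕ):ℝ) + 1)/2) = -((5:ℝ)/2) by norm_num] at h
  rw [show ((↑(4:ℕ):ℝ) + 1)/2 = (5:ℝ)/2 by norm_num] at h
  have hg : Real.Gamma (5/2) = 3 * Real.sqrt Real.pi / 4 := by
    rw [show (5/2:ℝ) = 3/2 + 1 by norm_num, Real.Gamma_add_one (by norm_num),
      Gamma_three_half]
    ring
  rw [h, half_rpow_neg, hg,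
    show (5/2:ℝ) = 2 + 1/2 by norm_num, Real.rpow_add (by norm_num),
    two_rpow_half, Real.sqrt_mul (by norm_num : (0:ℝ) ≤ 2) Real.pi,
    show (2:ℝ) ^ (2:ℝ) = 4 by
      rw [show (2:ℝ) = ((2:ℕ):ℝ) by norm_num, Real.rpow_natCast]; norm_num]
  ring

noncomputable def hh (n : ℕ) : ℝ := if n = 0 then 1 else if n = 2 then 1 else if n = 4 then 3 else 0

lemma mom_hh (n : ℕ) (hn : n ≤ 4) : mom n = Real.sqrt (2 * Real.pi) * hh n := by
  interval_cases n
  · simpa [hh] using mom_zero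
  · simp [hh, mom_odd 1 (by decide)]
  · simpa [hh] using mom_two
  · simp [hh, mom_odd 3 (by decide)]
  · simp [hh, mom_four]; ring



def ee {p : ℕ} (i j k l m : Fin p) : ℕ :=
  (if i = m then 1 else 0) + (if j = m then 1 else 0) + (if k = m then 1 else 0) +
    (if l = m then 1 else 0)

noncomputable def kk {p : ℕ} (i j k l : Fin p) : ℝ :=
  (if i = j then (1:ℝ) else 0) * (if k = l then 1 else 0) +
    (if i = k then (1:ℝ) else 0) * (if j = l then 1 else 0) +
    (if i = l then (1:ℝ) else 0) * (if j = k then 1 else 0)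

lemma ee_le_four {p : ℕ} (i j k l m : Fin p) : ee i j k l m ≤ 4 := by
  unfold ee; split_ifs <;> norm_num

lemma prod_hh {p : ℕ} (i j k l : Fin p) :
    ∏ m : Fin p, hh (ee i j k l m) = kk i j k l := by
  by_cases hij : i = j
  · by_cases hkl : k = l
    · by_cases hik : i = k
      · -- all equal
        rw [Finset.prod_eq_single_of_mem i (Finset.mem_univ i)
          (fun m _ hm => by
            unfold ee hh
            have : ¬ i = m := Ne.symm hm
            simp_all)]
        · unfold ee hh kk; simp_all; norm_num
      · -- two distinct pairs {i,i,k,k}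
        rw [Finset.prod_eq_one (fun m _ => by
          unfold ee hh
          by_cases h1 : i = m <;> by_cases h3 : k = m <;> simp_all)]
        unfold kk
        by_cases h1 : i = k <;> by_cases h2 : i = l <;> simp_all
    · -- i = j, k ≠ l : zero
      rw [Finset.prod_eq_zero (Finset.mem_univ l) (by
        unfold ee hh
        by_cases h1 : i = l <;> by_cases h3 : k = l <;> simp_all)]
      unfold kk
      by_cases h1 : i = k <;> by_cases h2 : i = l <;> by_cases h3 : k = l <;> simp_all
  · by_cases hik : i = k
    · by_cases hjl : j = l
      · -- {i,j,i,j}, i ≠ j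
        rw [Finset.prod_eq_one (fun m _ => by
          unfold ee hh
          by_cases h1 : i = m <;> by_cases h2 : j = m <;> simp_all)]
        unfold kk
        by_cases h2 : i = l <;> by_cases h3 : j = k <;> simp_all
      · -- j unpaired
        rw [Finset.prod_eq_zero (Finset.mem_univ j) (by
          unfold ee hh
          by_cases h1 : i = j <;> by_cases h4 : l = j <;> simp_all)]
        unfold kk
        by_cases h1 : i = l <;> by_cases h2 : j = k <;> simp_all
    · by_cases hil : i = l
      · by_cases hjk : j = k
        · -- {i,j,j,i}
          rw [Finset.prod_eq_one (fun m _ => by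
            unfold ee hh
            by_cases h1 : i = m <;> by_cases h2 : j = m <;> simp_all)]
          unfold kk
          by_cases h1 : i = j <;> by_cases h2 : j = l <;> simp_all
        · -- k unpaired
          rw [Finset.prod_eq_zero (Finset.mem_univ k) (by
            unfold ee hh
            by_cases h2 : j = k <;> by_cases h4 : l = k <;> simp_all)]
          unfold kk
          by_cases h2 : j = l <;> by_cases h3 : j = k <;> simp_all
      · -- i unpaired
        rw [Finset.prod_eq_zero (Finset.mem_univ i) (by
          unfold ee hh
          by_cases h2 : j = i <;> by_cases h3 : k = i <;> by_cases h4 : l = i <;> simp_all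
          <;> simp_all [eq_comm])]
        unfold kk
        simp_all

lemma integrand_eq {p : ℕ} (i j k l : Fin p) (z : Fin p → ℝ) :
    (∏ m, Real.exp (-(1/2:ℝ) * (z m)^2)) * (z i * z j * z k * z l)
      = ∏ m, ((z m) ^ (ee i j k l m) * Real.exp (-(1/2:ℝ) * (z m)^2)) := by
  rw [Finset.prod_mul_distrib, mul_comm]
  congr 1
  have h : ∀ m, (z m) ^ (ee i j k l m) =
      (if i = m then z m else 1) * (if j = m then z m else 1) *
      (if k = m then z m else 1) * (if l = m then z m else 1) := by
    intro m; unfold ee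
    by_cases h1 : i = m <;> by_cases h2 : j = m <;> by_cases h3 : k = m <;>
      by_cases h4 : l = m <;> simp [h1, h2, h3, h4] <;> ring
  simp_rw [h]
  simp only [Finset.prod_mul_distrib, Finset.prod_ite_eq, Finset.mem_univ, if_true]

lemma integrable_E4term {p : ℕ} (i j k l : Fin p) :
    Integrable (fun z : Fin p → ℝ =>
      (∏ m, Real.exp (-(1/2:ℝ) * (z m)^2)) * (z i * z j * z k * z l)) := by
  rw [show (fun z : Fin p → ℝ =>
      (∏ m, Real.exp (-(1/2:ℝ) * (z m)^2)) * (z i * z j * z k * z l))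
    = fun z : Fin p → ℝ =>
      ∏ m, ((z m) ^ (ee i j k l m) * Real.exp (-(1/2:ℝ) * (z m)^2)) from
    funext (integrand_eq i j k l)]
  exact Integrable.fintype_prod (fun m => integrable_pow_gauss (ee i j k l m))

lemma E4 {p : ℕ} (i j k l : Fin p) :
    ∫ z : Fin p → ℝ, (∏ m, Real.exp (-(1/2:ℝ) * (z m)^2)) * (z i * z j * z k * z l)
      = Real.sqrt (2 * Real.pi) ^ p * kk i j k l := by
  rw [show (fun z : Fin p → ℝ =>
      (∏ m, Real.exp (-(1/2:ℝ) * (z m)^2)) * (z i * z j * z k * z l))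
    = fun z : Fin p → ℝ =>
      ∏ m, ((z m) ^ (ee i j k l m) * Real.exp (-(1/2:ℝ) * (z m)^2)) from
    funext (integrand_eq i j k l)]
  rw [MeasureTheory.volume_pi, MeasureTheory.integral_fintype_prod_eq_prod
    (fun m (t : ℝ) => t ^ (ee i j k l m) * Real.exp (-(1/2:ℝ) * t^2))]
  have : ∀ m : Fin p, (∫ t : ℝ, t ^ (ee i j k l m) * Real.exp (-(1/2:ℝ) * t^2))
      = Real.sqrt (2 * Real.pi) * hh (ee i j k l m) :=
    fun m => mom_hh _ (ee_le_four i j k l m)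
  simp_rw [this]
  rw [Finset.prod_mul_distrib, Finset.prod_const, prod_hh, Finset.card_univ, Fintype.card_fin]

lemma sum_kk {p : ℕ} (P Q : Matrix (Fin p) (Fin p) ℝ) :
    ∑ c : (Fin p × Fin p) × Fin p × Fin p,
        P c.1.1 c.1.2 * Q c.2.1 c.2.2 * kk c.1.1 c.1.2 c.2.1 c.2.2
      = P.trace * Q.trace + (P * Qᵀ).trace + (P * Q).trace := by
  unfold kk
  rw [Fintype.sum_prod_type]
  simp_rw [Fintype.sum_prod_type]
  simp only [mul_add, mul_ite, ite_mul, mul_one, one_mul, mul_zero, zero_mul,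
    Finset.sum_add_distrib, Finset.sum_ite_eq, Finset.sum_ite_eq', Finset.mem_univ, if_true]
  simp only [Matrix.trace, Matrix.diag, Matrix.mul_apply, Matrix.transpose_apply,
    Finset.sum_mul, Finset.mul_sum]
  congr 1
  · congr 1
    · have h1 : ∀ x : Fin p,
          (∑ x1 : Fin p, ∑ x2 : Fin p, if x = x1 then P x x1 * Q x2 x2 else 0)
            = ∑ x2 : Fin p, P x x * Q x2 x2 := by
        intro x; rw [Finset.sum_comm]; simp
      simp_rw [h1]
      exact Finset.sum_comm
  · show _ = ∑ i : Fin p, ∑ j : Fin p, P i j * Q j i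
    apply Finset.sum_congr rfl
    intro i _
    apply Finset.sum_congr rfl
    intro j _
    simp

lemma hq {p : ℕ} (R : Matrix (Fin p) (Fin p) ℝ) (z : Fin p → ℝ) :
    z ⬝ᵥ R *ᵥ z = ∑ x : Fin p × Fin p, z x.1 * R x.1 x.2 * z x.2 := by
  simp [dotProduct, mulVec, Fintype.sum_prod_type, Finset.mul_sum, mul_assoc]

lemma core {p : ℕ} (P Q : Matrix (Fin p) (Fin p) ℝ) :
    ∫ z : Fin p → ℝ, (∏ m, Real.exp (-(1/2:ℝ) * (z m)^2)) * ((z ⬝ᵥ P *ᵥ z) * (z ⬝ᵥ Q *ᵥ z))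
      = Real.sqrt (2*Real.pi) ^ p *
        (P.trace * Q.trace + (P * Qᵀ).trace + (P * Q).trace) := by
  have key : ∀ z : Fin p → ℝ,
      (∏ m, Real.exp (-(1/2:ℝ) * (z m)^2)) * ((z ⬝ᵥ P *ᵥ z) * (z ⬝ᵥ Q *ᵥ z))
      = ∑ c : (Fin p × Fin p) × Fin p × Fin p,
          P c.1.1 c.1.2 * Q c.2.1 c.2.2 *
            ((∏ m, Real.exp (-(1/2:ℝ) * (z m)^2)) *
              (z c.1.1 * z c.1.2 * z c.2.1 * z c.2.2)) := by
    intro z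
    rw [hq P z, hq Q z, Finset.sum_mul_sum]
    rw [show (∑ c : (Fin p × Fin p) × Fin p × Fin p,
          P c.1.1 c.1.2 * Q c.2.1 c.2.2 *
            ((∏ m, Real.exp (-(1/2:ℝ) * (z m)^2)) *
              (z c.1.1 * z c.1.2 * z c.2.1 * z c.2.2)))
      = ∑ x : Fin p × Fin p, ∑ y : Fin p × Fin p,
          P x.1 x.2 * Q y.1 y.2 *
            ((∏ m, Real.exp (-(1/2:ℝ) * (z m)^2)) *
              (z x.1 * z x.2 * z y.1 * z y.2)) from Fintype.sum_prod_type _]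
    rw [Finset.mul_sum]
    apply Finset.sum_congr rfl
    intro x _
    rw [Finset.mul_sum]
    apply Finset.sum_congr rfl
    intro c _
    ring
  rw [show (fun z : Fin p → ℝ =>
      (∏ m, Real.exp (-(1/2:ℝ) * (z m)^2)) * ((z ⬝ᵥ P *ᵥ z) * (z ⬝ᵥ Q *ᵥ z)))
    = fun z : Fin p → ℝ =>
      ∑ c : (Fin p × Fin p) × Fin p × Fin p,
          P c.1.1 c.1.2 * Q c.2.1 c.2.2 *
            ((∏ m, Real.exp (-(1/2:ℝ) * (z m)^2)) *
              (z c.1.1 * z c.1.2 * z c.2.1 * z c.2.2)) from funext key]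
  rw [integral_finset_sum _ (fun c _ =>
    ((integrable_E4term c.1.1 c.1.2 c.2.1 c.2.2).const_mul _))]
  simp_rw [integral_const_mul, E4]
  rw [← sum_kk P Q, Finset.mul_sum]
  apply Finset.sum_congr rfl
  intro c _
  ring

lemma integral_eq_det_mul {p : ℕ} (M : Matrix (Fin p) (Fin p) ℝ) (hM : M.det ≠ 0)
    (f : (Fin p → ℝ) → ℝ) (hf : Continuous f) :
    ∫ x : Fin p → ℝ, f x = |M.det| * ∫ z : Fin p → ℝ, f (M *ᵥ z) := by
  have h1 : Measure.map (Matrix.toLin' M) volume = ENNReal.ofReal |M.det⁻¹| • volume :=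
    Real.map_matrix_volume_pi_eq_smul_volume_pi hM
  have h2 : ∫ z : Fin p → ℝ, f (M *ᵥ z) = ∫ z : Fin p → ℝ, f (Matrix.toLin' M z) := by
    simp [Matrix.toLin'_apply]
  have hc : Continuous (Matrix.toLin' M) := (Matrix.toLin' M).continuous_of_finiteDimensional
  rw [h2, ← MeasureTheory.integral_map hc.measurable.aemeasurable hf.aestronglyMeasurable,
    h1, integral_smul_measure, ENNReal.toReal_ofReal (abs_nonneg _), smul_eq_mul,
    abs_inv, ← mul_assoc, mul_inv_cancel₀ (abs_ne_zero.mpr hM), one_mul]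

lemma quad_subst {p : ℕ} (S N : Matrix (Fin p) (Fin p) ℝ) (hS : Sᵀ = S) (z : Fin p → ℝ) :
    (S *ᵥ z) ⬝ᵥ (N *ᵥ (S *ᵥ z)) = z ⬝ᵥ ((S * N * S) *ᵥ z) := by
  rw [Matrix.mulVec_mulVec, Matrix.mul_assoc, ← Matrix.mulVec_mulVec (N := N * S),
    Matrix.dotProduct_mulVec z S, ← hS, Matrix.vecMul_transpose, hS]

lemma continuous_quad {p : ℕ} (N : Matrix (Fin p) (Fin p) ℝ) :
    Continuous fun x : Fin p → ℝ => x ⬝ᵥ N *ᵥ x := by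
  simp only [dotProduct, Matrix.mulVec]
  refine continuous_finset_sum _ (fun i _ => (continuous_apply i).mul ?_)
  exact continuous_finset_sum _ (fun j _ => continuous_const.mul (continuous_apply j))

/-- for symmetric `A, B` (Isserlis-type fourth moment identity),
`∫ φ_{μ,V}(y)^{1+α} [(y−μ)ᵀA(y−μ)][(y−μ)ᵀB(y−μ)] dy`
`  = (2π)^{−pα/2}(det V)^{−α/2}(1+α)^{−p/2−2} [Tr(VA)Tr(VB) + 2Tr(VAVB)]`. -/
theorem integral_gaussianPdf_rpow_fourthMoment {p : ℕ}
    (V : Matrix (Fin p) (Fin p) ℝ) (hVsymm : V.IsSymm) (hVpd : V.PosDef)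
    (μ : Fin p → ℝ) (α : ℝ) (hα : 0 ≤ α)
    (A B : Matrix (Fin p) (Fin p) ℝ) (hAsymm : A.IsSymm) (hBsymm : B.IsSymm) :
    ∫ y : Fin p → ℝ,
        gaussianPdf V μ y ^ (1 + α) *
          (((y - μ) ⬝ᵥ (A *ᵥ (y - μ))) * ((y - μ) ⬝ᵥ (B *ᵥ (y - μ)))) =
      (2 * Real.pi) ^ (-(p : ℝ) * α / 2) * V.det ^ (-α / 2) *
        (1 + α) ^ (-(p : ℝ) / 2 - 2) *
        ((V * A).trace * (V * B).trace + 2 * (V * A * V * B).trace) := by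
  have hβ : (0:ℝ) < 1 + α := by linarith
  have h2π : (0:ℝ) < 2 * Real.pi := by positivity
  have hdetV : 0 < V.det := hVpd.det_pos
  -- the square root of V
  have hPSD := hVpd.posSemidef
  obtain ⟨S, hSS, hSsymm⟩ : ∃ S : Matrix (Fin p) (Fin p) ℝ, S * S = V ∧ Sᵀ = S := by
    open scoped MatrixOrder in
    exact ⟨CFC.sqrt V, CFC.sqrt_mul_sqrt_self V hPSD.nonneg,
      (by simpa using (CFC.sqrt_nonneg V).posSemidef.1 : (CFC.sqrt V).IsSymm).eq⟩
  have hdetS : S.det * S.det = V.det := by rw [← Matrix.det_mul, hSS]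
  have hdetS0 : S.det ≠ 0 := by
    intro h
    rw [h, mul_zero] at hdetS
    exact (ne_of_gt hdetV) hdetS.symm
  have habsS : |S.det| = Real.sqrt V.det := by
    rw [← hdetS, Real.sqrt_mul_self_eq_abs]
  have hSinv : S * V⁻¹ * S = 1 := by
    rw [← hSS, Matrix.mul_inv_rev]
    have h1 : S * S⁻¹ = 1 := Matrix.mul_nonsing_inv S (isUnit_iff_ne_zero.mpr hdetS0)
    have h2 : S⁻¹ * S = 1 := Matrix.nonsing_inv_mul S (isUnit_iff_ne_zero.mpr hdetS0)
    calc S * (S⁻¹ * S⁻¹) * S = S * S⁻¹ * (S⁻¹ * S) := by noncomm_ring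
    _ = 1 := by rw [h1, h2, one_mul]
  -- scaling
  set t : ℝ := (1 + α) ^ (-(1/2:ℝ)) with htdef
  have ht0 : 0 < t := Real.rpow_pos_of_pos hβ _
  have ht2 : t ^ 2 = (1+α)⁻¹ := by
    rw [htdef, ← Real.rpow_natCast ((1+α) ^ (-(1/2:ℝ))) 2, ← Real.rpow_mul hβ.le]
    norm_num [Real.rpow_neg_one]
  set M : Matrix (Fin p) (Fin p) ℝ := t • S with hMdef
  have hdetM : M.det = t ^ p * S.det := by
    rw [hMdef, Matrix.det_smul, Fintype.card_fin]
  have hdetM0 : M.det ≠ 0 := by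
    rw [hdetM]
    exact mul_ne_zero (pow_ne_zero _ ht0.ne') hdetS0
  have habsM : |M.det| = t ^ p * Real.sqrt V.det := by
    rw [hdetM, abs_mul, abs_pow, abs_of_pos ht0, habsS]
  -- the recentred integrand
  set F : (Fin p → ℝ) → ℝ := fun x =>
    Real.exp (-(1/2:ℝ) * (x ⬝ᵥ V⁻¹ *ᵥ x) * (1+α)) *
      ((x ⬝ᵥ A *ᵥ x) * (x ⬝ᵥ B *ᵥ x)) with hFdef
  have hFcont : Continuous F := by
    apply Continuous.mul
    · exact Real.continuous_exp.comp (Continuous.mul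
        (continuous_const.mul (continuous_quad V⁻¹)) continuous_const)
    · exact (continuous_quad A).mul (continuous_quad B)
  have hpdf : ∀ y : Fin p → ℝ,
      gaussianPdf V μ y ^ (1 + α) *
          (((y - μ) ⬝ᵥ (A *ᵥ (y - μ))) * ((y - μ) ⬝ᵥ (B *ᵥ (y - μ))))
        = ((2 * Real.pi) ^ (-(p : ℝ) / 2 * (1+α)) * V.det ^ (-(1:ℝ) / 2 * (1+α))) *
            F (y - μ) := by
    intro y
    rw [hFdef, gaussianPdf, Real.mul_rpow (by positivity) (Real.exp_pos _).le,
      Real.mul_rpow (by positivity) (by positivity),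
      ← Real.rpow_mul h2π.le, ← Real.rpow_mul hdetV.le, ← Real.exp_mul]
    ring
  rw [show (fun y : Fin p → ℝ =>
      gaussianPdf V μ y ^ (1 + α) *
        (((y - μ) ⬝ᵥ (A *ᵥ (y - μ))) * ((y - μ) ⬝ᵥ (B *ᵥ (y - μ)))))
    = fun y : Fin p → ℝ =>
      ((2 * Real.pi) ^ (-(p : ℝ) / 2 * (1+α)) * V.det ^ (-(1:ℝ) / 2 * (1+α))) * F (y - μ)
    from funext hpdf]
  rw [MeasureTheory.integral_const_mul, MeasureTheory.integral_sub_right_eq_self F μ]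
  rw [integral_eq_det_mul M hdetM0 F hFcont]
  -- evaluate F ∘ M
  have hquad : ∀ (N : Matrix (Fin p) (Fin p) ℝ) (z : Fin p → ℝ),
      (M *ᵥ z) ⬝ᵥ (N *ᵥ (M *ᵥ z)) = t ^ 2 * (z ⬝ᵥ (S * N * S) *ᵥ z) := by
    intro N z
    rw [hMdef, Matrix.smul_mulVec, Matrix.mulVec_smul, smul_dotProduct,
      dotProduct_smul, quad_subst S N hSsymm z, smul_eq_mul, smul_eq_mul]
    ring
  have hFM : ∀ z : Fin p → ℝ, F (M *ᵥ z)
      = (1+α)⁻¹ * (1+α)⁻¹ *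
        ((∏ m, Real.exp (-(1/2:ℝ) * (z m)^2)) *
          ((z ⬝ᵥ (S*A*S) *ᵥ z) * (z ⬝ᵥ (S*B*S) *ᵥ z))) := by
    intro z
    rw [hFdef]
    simp only []
    rw [hquad V⁻¹ z, hquad A z, hquad B z, hSinv, ht2]
    have harg : -(1/2:ℝ) * ((1+α)⁻¹ * (z ⬝ᵥ (1 : Matrix (Fin p) (Fin p) ℝ) *ᵥ z)) * (1+α)
        = -(1/2:ℝ) * (z ⬝ᵥ z) := by
      rw [Matrix.one_mulVec]
      field_simp
    rw [harg]
    have hexp : Real.exp (-(1/2:ℝ) * (z ⬝ᵥ z)) = ∏ m, Real.exp (-(1/2:ℝ) * (z m)^2) := by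
      rw [dotProduct, Finset.mul_sum, Real.exp_sum]
      apply Finset.prod_congr rfl
      intro m _
      congr 1
      ring
    rw [hexp]
    ring
  rw [show (fun z : Fin p → ℝ => F (M *ᵥ z))
    = fun z : Fin p → ℝ =>
      (1+α)⁻¹ * (1+α)⁻¹ *
        ((∏ m, Real.exp (-(1/2:ℝ) * (z m)^2)) *
          ((z ⬝ᵥ (S*A*S) *ᵥ z) * (z ⬝ᵥ (S*B*S) *ᵥ z))) from funext hFM]
  rw [MeasureTheory.integral_const_mul, core (S*A*S) (S*B*S)]
  -- traces
  have htrA : (S*A*S).trace = (V*A).trace := by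
    rw [Matrix.trace_mul_cycle S A S, hSS]
  have htrB : (S*B*S).trace = (V*B).trace := by
    rw [Matrix.trace_mul_cycle S B S, hSS]
  have hQT : (S*B*S)ᵀ = S*B*S := by
    rw [Matrix.transpose_mul, Matrix.transpose_mul, hSsymm, hBsymm.eq, ← Matrix.mul_assoc]
  have htrAB : ((S*A*S) * (S*B*S)).trace = (V*A*V*B).trace := by
    have h1 : (S*A*S) * (S*B*S) = S*(A*(S*S)*B*S) := by noncomm_ring
    rw [h1, hSS, Matrix.trace_mul_comm, Matrix.mul_assoc (A*V*B) S S, hSS,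
      Matrix.trace_mul_comm, ← Matrix.mul_assoc, ← Matrix.mul_assoc]
  rw [hQT, htrA, htrB, htrAB, habsM]
  -- final scalar arithmetic
  have hx1 : Real.sqrt V.det = V.det ^ ((1:ℝ)/2) := Real.sqrt_eq_rpow _
  have hx2 : Real.sqrt (2*Real.pi) ^ p = (2*Real.pi) ^ ((p:ℝ)/2) := by
    rw [Real.sqrt_eq_rpow, ← Real.rpow_natCast ((2*Real.pi) ^ ((1:ℝ)/2)) p,
      ← Real.rpow_mul h2π.le]
    congr 1
    ring
  have hx3 : t ^ p = (1+α) ^ (-(p:ℝ)/2) := by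
    rw [htdef, ← Real.rpow_natCast ((1+α) ^ (-(1/2:ℝ))) p, ← Real.rpow_mul hβ.le]
    congr 1
    ring
  have hA1 : (2*Real.pi) ^ (-(p : ℝ) / 2 * (1+α)) * (2*Real.pi) ^ ((p:ℝ)/2)
      = (2 * Real.pi) ^ (-(p : ℝ) * α / 2) := by
    rw [← Real.rpow_add h2π]
    congr 1
    ring
  have hA2 : V.det ^ (-(1:ℝ) / 2 * (1+α)) * V.det ^ ((1:ℝ)/2) = V.det ^ (-α / 2) := by
    rw [← Real.rpow_add hdetV]
    congr 1
    ring
  have hA3 : (1+α) ^ (-(p:ℝ)/2) * ((1+α)⁻¹ * (1+α)⁻¹) = (1+α) ^ (-(p : ℝ) / 2 - 2) := by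
    rw [show (1+α)⁻¹ = (1+α) ^ (-1:ℝ) from (Real.rpow_neg_one _).symm,
      ← Real.rpow_add hβ, ← Real.rpow_add hβ]
    congr 1
    ring
  rw [hx1, hx2, hx3, ← hA1, ← hA2, ← hA3]
  ring
end

section
/- Let V be a symmetric positive definite real p×p matrix, μ ∈ ℝ^p, α > 0, and M any real k×p matrix. Then the function t ↦ φ_{μ,V}(t)^α · M V^{−1} (t − μ) is bounded on ℝ^p (its Euclidean norm admits a finite uniform upper bound). Consequently the influence function of the MDPDE fixed-effects functional T_α^β, IF_{i0}(t) = (X'ᵀX')^{−1} X_{i0}ᵀ V_{i0}^{−1}(t − X_{i0}β) φ(t;θ)^α, is bounded in t for every α > 0, i.e., the MDPDE of β is B-robust. -/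
open Matrix MeasureTheory

/-- Elementary bound: `r · exp(−c r²) ≤ 1/(2√c)` for `c > 0`. -/
lemma aux_exp_bound {c : ℝ} (hc : 0 < c) (r : ℝ) :
    r * Real.exp (-(c * r ^ 2)) ≤ 1 / (2 * Real.sqrt c) := by
  have hsc : 0 < Real.sqrt c := Real.sqrt_pos.mpr hc
  rw [le_div_iff₀ (by positivity)]
  have h1 : 1 + c * r ^ 2 ≤ Real.exp (c * r ^ 2) := by
    have := Real.add_one_le_exp (c * r ^ 2); linarith
  have h2 : 2 * Real.sqrt c * r ≤ 1 + c * r ^ 2 := by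
    have h3 : 0 ≤ (Real.sqrt c * r - 1) ^ 2 := sq_nonneg _
    have h4 : Real.sqrt c ^ 2 = c := Real.sq_sqrt hc.le
    nlinarith [h3, h4]
  have h5 : 2 * Real.sqrt c * r ≤ Real.exp (c * r ^ 2) := h2.trans h1
  calc r * Real.exp (-(c * r ^ 2)) * (2 * Real.sqrt c)
      = (2 * Real.sqrt c * r) * Real.exp (-(c * r ^ 2)) := by ring
    _ ≤ Real.exp (c * r ^ 2) * Real.exp (-(c * r ^ 2)) :=
        mul_le_mul_of_nonneg_right h5 (Real.exp_pos _).le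
    _ = 1 := by rw [← Real.exp_add]; simp

/-- The sup norm of a real vector is at most the square root of its self dot product. -/
lemma aux_norm_le_sqrt_dot {p : ℕ} (y : Fin p → ℝ) : ‖y‖ ≤ Real.sqrt (y ⬝ᵥ y) := by
  rw [pi_norm_le_iff_of_nonneg (Real.sqrt_nonneg _)]
  intro i
  rw [Real.norm_eq_abs, ← Real.sqrt_sq_eq_abs]
  apply Real.sqrt_le_sqrt
  simpa [dotProduct, sq] using Finset.single_le_sum (f := fun j => y j * y j)
    (fun j _ => mul_self_nonneg (y j)) (Finset.mem_univ i)

/-- for every `α > 0` and any `k×p` matrix `M`, the function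
`t ↦ φ_{μ,V}(t)^α · M V⁻¹ (t − μ)` is bounded on `ℝ^p`; hence the influence function of
the MDPDE fixed-effects functional `T_α^β` is bounded in the contamination point, i.e.
the MDPDE of `β` is B-robust for `α > 0`. -/
theorem mdpde_beta_influence_bounded {p k : ℕ}
    (V : Matrix (Fin p) (Fin p) ℝ) (hVsymm : V.IsSymm) (hVpd : V.PosDef)
    (μ : Fin p → ℝ) (α : ℝ) (hα : 0 < α) (M : Matrix (Fin k) (Fin p) ℝ) :
    ∃ C : ℝ, ∀ t : Fin p → ℝ,
      ‖gaussianPdf V μ t ^ α • (M *ᵥ (V⁻¹ *ᵥ (t - μ)))‖ ≤ C := by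
  -- The positive constant in front of the exponential
  set c : ℝ := (2 * Real.pi) ^ (-(p : ℝ) / 2) * V.det ^ (-(1 : ℝ) / 2) with hc_def
  have hdet : (0 : ℝ) < V.det := hVpd.det_pos
  have hc : 0 < c := by
    apply mul_pos <;> exact Real.rpow_pos_of_pos (by positivity) _
  -- Square root of V⁻¹
  have hW : (V⁻¹).PosDef := hVpd.inv
  set S : Matrix (Fin p) (Fin p) ℝ := (open MatrixOrder in CFC.sqrt (V⁻¹)) with hS_def
  have hSS : S * S = V⁻¹ := open MatrixOrder in CFC.sqrt_mul_sqrt_self _ hW.posSemidef.nonneg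
  have hSsymm : Sᵀ = S := by
    have : S.IsHermitian := (open MatrixOrder in (CFC.sqrt_nonneg (V⁻¹)).posSemidef).isHermitian
    simpa [Matrix.IsHermitian, Matrix.conjTranspose_eq_transpose_of_trivial] using this
  -- Operator norm bound for the matrix M * S
  set f := LinearMap.toContinuousLinearMap (Matrix.mulVecLin (M * S)) with hf_def
  refine ⟨c ^ α * ‖f‖ * (1 / (2 * Real.sqrt (α / 2))), fun t => ?_⟩
  set x : Fin p → ℝ := t - μ with hx_def
  set y : Fin p → ℝ := S *ᵥ x with hy_def
  -- rewrite the quadratic form and the linear term via y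
  have hVx : V⁻¹ *ᵥ x = S *ᵥ y := by rw [hy_def, mulVec_mulVec, hSS]
  have hq : x ⬝ᵥ (V⁻¹ *ᵥ x) = y ⬝ᵥ y := by
    rw [hVx, dotProduct_mulVec x S, ← mulVec_transpose, hSsymm]
  have hqnn : 0 ≤ y ⬝ᵥ y := by
    simpa [dotProduct] using Finset.sum_nonneg fun j _ => mul_self_nonneg (y j)
  have hvec : M *ᵥ (V⁻¹ *ᵥ x) = (M * S) *ᵥ y := by rw [hVx, mulVec_mulVec]
  -- the pdf rewritten
  have hpdf : gaussianPdf V μ t ^ α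
      = c ^ α * Real.exp (-(1 / 2 : ℝ) * (y ⬝ᵥ y) * α) := by
    rw [gaussianPdf, ← hc_def, ← hx_def, hq,
      Real.mul_rpow hc.le (Real.exp_pos _).le, Real.rpow_def_of_pos (Real.exp_pos _),
      Real.log_exp]
  have hnorm_v : ‖(M * S) *ᵥ y‖ ≤ ‖f‖ * ‖y‖ := f.le_opNorm y
  set r : ℝ := Real.sqrt (y ⬝ᵥ y) with hr_def
  have hr2 : r ^ 2 = y ⬝ᵥ y := Real.sq_sqrt hqnn
  have hy_le : ‖y‖ ≤ r := aux_norm_le_sqrt_dot y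
  have hexp : Real.exp (-(1 / 2 : ℝ) * (y ⬝ᵥ y) * α) = Real.exp (-(α / 2 * r ^ 2)) := by
    rw [hr2]; ring_nf
  calc ‖gaussianPdf V μ t ^ α • (M *ᵥ (V⁻¹ *ᵥ x))‖
      = gaussianPdf V μ t ^ α * ‖(M * S) *ᵥ y‖ := by
        rw [hvec, norm_smul, Real.norm_eq_abs, abs_of_nonneg (by rw [hpdf]; positivity)]
    _ = c ^ α * Real.exp (-(α / 2 * r ^ 2)) * ‖(M * S) *ᵥ y‖ := by rw [hpdf, hexp]
    _ ≤ c ^ α * Real.exp (-(α / 2 * r ^ 2)) * (‖f‖ * r) := by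
        apply mul_le_mul_of_nonneg_left (hnorm_v.trans ?_) (by positivity)
        exact mul_le_mul_of_nonneg_left hy_le (norm_nonneg f)
    _ = c ^ α * ‖f‖ * (r * Real.exp (-(α / 2 * r ^ 2))) := by ring
    _ ≤ c ^ α * ‖f‖ * (1 / (2 * Real.sqrt (α / 2))) := by
        apply mul_le_mul_of_nonneg_left (aux_exp_bound (by positivity) r) (by positivity)
end

section
/- Let V be a symmetric positive definite real p×p matrix, μ ∈ ℝ^p, α > 0, and U a symmetric real p×p matrix. Then the function t ↦ φ_{μ,V}(t)^α · [ Tr(V^{−1}U) − (t−μ)ᵀ V^{−1} U V^{−1} (t−μ) ] is bounded on ℝ^p. Consequently the influence function of the MDPDE variance-components functional T_α^Σ is bounded in the contamination point for every α > 0, i.e., the MDPDE of the variance components is B-robust. -/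
open Matrix MeasureTheory

/-- A quadratic form is bounded by the sum of absolute entries times the squared norm. -/
lemma abs_quad_le {p : ℕ} (N : Matrix (Fin p) (Fin p) ℝ) (y : Fin p → ℝ) :
    |y ⬝ᵥ (N *ᵥ y)| ≤ (∑ i, ∑ j, |N i j|) * (y ⬝ᵥ y) := by
  have expand : y ⬝ᵥ (N *ᵥ y) = ∑ i, ∑ j, y i * (N i j * y j) := by
    simp [dotProduct, Matrix.mulVec, Finset.mul_sum]
  rw [expand, Finset.sum_mul]
  refine (Finset.abs_sum_le_sum_abs _ _).trans (Finset.sum_le_sum fun i _ => ?_)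
  rw [Finset.sum_mul]
  refine (Finset.abs_sum_le_sum_abs _ _).trans (Finset.sum_le_sum fun j _ => ?_)
  have hii : y i * y i ≤ y ⬝ᵥ y :=
    Finset.single_le_sum (f := fun k => y k * y k) (fun k _ => mul_self_nonneg _)
      (Finset.mem_univ i)
  have hjj : y j * y j ≤ y ⬝ᵥ y :=
    Finset.single_le_sum (f := fun k => y k * y k) (fun k _ => mul_self_nonneg _)
      (Finset.mem_univ j)
  have h1 : |y i * (N i j * y j)| = |N i j| * (|y i| * |y j|) := by
    rw [abs_mul, abs_mul]; ring
  rw [h1]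
  have h2 : |y i| * |y j| ≤ y ⬝ᵥ y := by
    nlinarith [sq_nonneg (|y i| - |y j|), sq_abs (y i), sq_abs (y j), abs_nonneg (y i),
      abs_nonneg (y j)]
  exact mul_le_mul_of_nonneg_left h2 (abs_nonneg _)

/-- for every `α > 0` and symmetric `U`, the function
`t ↦ φ_{μ,V}(t)^α [Tr(V⁻¹U) − (t−μ)ᵀV⁻¹UV⁻¹(t−μ)]` is bounded on `ℝ^p`; hence the
influence function of the MDPDE variance-components functional `T_α^Σ` is bounded in the
contamination point, i.e. the MDPDE of the variance components is B-robust for `α > 0`. -/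
theorem mdpde_variance_influence_bounded {p : ℕ}
    (V : Matrix (Fin p) (Fin p) ℝ) (hVsymm : V.IsSymm) (hVpd : V.PosDef)
    (μ : Fin p → ℝ) (α : ℝ) (hα : 0 < α)
    (U : Matrix (Fin p) (Fin p) ℝ) (hUsymm : U.IsSymm) :
    ∃ C : ℝ, ∀ t : Fin p → ℝ,
      |gaussianPdf V μ t ^ α *
          ((V⁻¹ * U).trace - ((t - μ) ⬝ᵥ ((V⁻¹ * U * V⁻¹) *ᵥ (t - μ))))| ≤ C := by
  have hVinv : (V⁻¹).PosDef := hVpd.inv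
  have hps : (V⁻¹).PosSemidef := hVinv.posSemidef
  set W : Matrix (Fin p) (Fin p) ℝ := (open scoped MatrixOrder in CFC.sqrt (V⁻¹)) with hWdef
  have hW2 : W * W = V⁻¹ := open scoped MatrixOrder in CFC.sqrt_mul_sqrt_self (V⁻¹) hps.nonneg
  have hWT : Wᵀ = W := by
    rw [← Matrix.conjTranspose_eq_transpose_of_trivial]
    exact open scoped MatrixOrder in (CFC.sqrt_nonneg (V⁻¹)).posSemidef.1
  have key : ∀ (A : Matrix (Fin p) (Fin p) ℝ) (z : Fin p → ℝ),
      z ⬝ᵥ ((W * A * W) *ᵥ z) = (W *ᵥ z) ⬝ᵥ (A *ᵥ (W *ᵥ z)) := by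
    intro A z
    rw [← Matrix.mulVec_mulVec, ← Matrix.mulVec_mulVec, Matrix.dotProduct_mulVec,
      ← Matrix.mulVec_transpose, hWT]
  set c : ℝ := (2 * Real.pi) ^ (-(p : ℝ) / 2) * V.det ^ (-(1 : ℝ) / 2) with hcdef
  have hc : 0 < c :=
    mul_pos (Real.rpow_pos_of_pos (by positivity) _) (Real.rpow_pos_of_pos hVpd.det_pos _)
  set N : Matrix (Fin p) (Fin p) ℝ := W * U * W with hNdef
  set K : ℝ := ∑ i, ∑ j, |N i j| with hKdef
  have hK : 0 ≤ K := Finset.sum_nonneg fun i _ => Finset.sum_nonneg fun j _ => abs_nonneg _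
  set T : ℝ := (V⁻¹ * U).trace with hTdef
  refine ⟨c ^ α * (|T| + K * (2 / α)), fun t => ?_⟩
  set x : Fin p → ℝ := t - μ with hxdef
  set q : ℝ := x ⬝ᵥ (V⁻¹ *ᵥ x) with hqdef
  have hqy : q = (W *ᵥ x) ⬝ᵥ (W *ᵥ x) := by
    have h1 : W * 1 * W = V⁻¹ := by rw [mul_one, hW2]
    have := key 1 x
    rw [h1, Matrix.one_mulVec] at this
    exact this
  have hq0 : 0 ≤ q := by
    rw [hqy]
    exact Finset.sum_nonneg fun k _ => mul_self_nonneg _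
  have hM : x ⬝ᵥ ((V⁻¹ * U * V⁻¹) *ᵥ x) = (W *ᵥ x) ⬝ᵥ (N *ᵥ (W *ᵥ x)) := by
    have hMN : V⁻¹ * U * V⁻¹ = W * N * W := by
      rw [hNdef, ← hW2]; noncomm_ring
    rw [hMN, key]
  have hquad : |x ⬝ᵥ ((V⁻¹ * U * V⁻¹) *ᵥ x)| ≤ K * q := by
    rw [hM, hqy]
    exact abs_quad_le N (W *ᵥ x)
  -- rewrite the pdf power
  have hpdf : gaussianPdf V μ t ^ α = c ^ α * Real.exp (-(1 / 2 : ℝ) * q * α) := by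
    rw [gaussianPdf, ← hcdef, ← hxdef, ← hqdef,
      Real.mul_rpow hc.le (Real.exp_nonneg _), ← Real.exp_mul]
  set s : ℝ := q * α / 2 with hsdef
  have hs0 : 0 ≤ s := by
    rw [hsdef]
    exact div_nonneg (mul_nonneg hq0 hα.le) (by norm_num)
  have hse : Real.exp (-(1 / 2 : ℝ) * q * α) = Real.exp (-s) := by
    congr 1; rw [hsdef]; ring
  have he1 : Real.exp (-s) ≤ 1 := Real.exp_le_one_iff.mpr (by linarith)
  have he2 : Real.exp (-s) * s ≤ 1 := by
    have h3 : s ≤ Real.exp s := by linarith [Real.add_one_le_exp s]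
    have := mul_le_mul_of_nonneg_left h3 (Real.exp_pos (-s)).le
    rwa [← Real.exp_add, neg_add_cancel, Real.exp_zero] at this
  have habs : |gaussianPdf V μ t ^ α * (T - x ⬝ᵥ ((V⁻¹ * U * V⁻¹) *ᵥ x))|
      = c ^ α * Real.exp (-s) * |T - x ⬝ᵥ ((V⁻¹ * U * V⁻¹) *ᵥ x)| := by
    rw [hpdf, hse, abs_mul, abs_of_nonneg (mul_nonneg (Real.rpow_nonneg hc.le α) (Real.exp_pos _).le)]
  rw [habs]
  have hT1 : |T - x ⬝ᵥ ((V⁻¹ * U * V⁻¹) *ᵥ x)| ≤ |T| + K * q := by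
    calc |T - x ⬝ᵥ ((V⁻¹ * U * V⁻¹) *ᵥ x)| ≤ |T| + |x ⬝ᵥ ((V⁻¹ * U * V⁻¹) *ᵥ x)| :=
          abs_sub _ _
      _ ≤ |T| + K * q := by linarith
  have hstep : c ^ α * Real.exp (-s) * |T - x ⬝ᵥ ((V⁻¹ * U * V⁻¹) *ᵥ x)|
      ≤ c ^ α * (Real.exp (-s) * (|T| + K * q)) := by
    have hnn : (0:ℝ) ≤ c ^ α * Real.exp (-s) :=
      mul_nonneg (Real.rpow_nonneg hc.le α) (Real.exp_pos (-s)).le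
    calc c ^ α * Real.exp (-s) * |T - x ⬝ᵥ ((V⁻¹ * U * V⁻¹) *ᵥ x)|
        ≤ c ^ α * Real.exp (-s) * (|T| + K * q) := mul_le_mul_of_nonneg_left hT1 hnn
      _ = c ^ α * (Real.exp (-s) * (|T| + K * q)) := by ring
  refine hstep.trans ?_
  have hfinal : Real.exp (-s) * (|T| + K * q) ≤ |T| + K * (2 / α) := by
    have hq2s : q = 2 / α * s := by
      rw [hsdef]; field_simp
    have h4 : Real.exp (-s) * (K * q) = 2 / α * K * (Real.exp (-s) * s) := by
      rw [hq2s]; ring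
    have h5 : Real.exp (-s) * (K * q) ≤ K * (2 / α) := by
      rw [h4]
      have := mul_le_mul_of_nonneg_left he2 (mul_nonneg (div_nonneg (by norm_num : (0:ℝ) ≤ 2) hα.le) hK)
      linarith
    have h6 : Real.exp (-s) * |T| ≤ |T| := by
      have := mul_le_mul_of_nonneg_right he1 (abs_nonneg T)
      linarith
    linarith [mul_add (Real.exp (-s)) (|T|) (K * q)]
  exact mul_le_mul_of_nonneg_left hfinal (Real.rpow_nonneg hc.le α)
end
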